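/- arXiv:1611.06119 — 7 statements merged into one kernel-verified Lean document; each statement's English description precedes it below -/
import Mathlib

section
/- For every t > 0, the second moment of the explicit solution u(t,·) is finite and is given by ∫_ℝ x² u(t,x) dx = σ tanh(2σt) + (cosh(2σt))^{-2} · (∫_ℝ e^{-tanh(2σt)y²/(2σ)} y² u₀(y) dy) / (∫_ℝ e^{-tanh(2σt)y²/(2σ)} u₀(y) dy). In particular the mean fitness f̄(t) = ∫_ℝ (-x²) u(t,x) dx equals minus this quantity. -/
open MeasureTheory Real Filter Topology

lemma integrable_sq_mul_exp_neg {b : ℝ} (hb : 0 < b) :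
    Integrable fun x : ℝ => x ^ 2 * Real.exp (-b * x ^ 2) := by
  have h := integrable_rpow_mul_exp_neg_mul_sq hb (s := 2) (by norm_num)
  have : ∀ x : ℝ, x ^ (2 : ℝ) = x ^ 2 := fun x => by
    rw [show (2:ℝ) = ((2:ℕ):ℝ) by norm_num, Real.rpow_natCast]
  simpa [this] using h

lemma integral_mul_exp_neg_mul_sq_zero {b : ℝ} (hb : 0 < b) :
    ∫ x : ℝ, x * Real.exp (-b * x ^ 2) = 0 := by
  have h := integral_neg_eq_self (fun z : ℝ => z * Real.exp (-b * z ^ 2)) (volume : Measure ℝ)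
  simp only [neg_sq, neg_mul, integral_neg] at h
  have h2 : ∫ x : ℝ, x * Real.exp (-b * x ^ 2) = ∫ x : ℝ, x * Real.exp (-(b * x ^ 2)) := by
    simp only [neg_mul]
  rw [h2]
  linarith

lemma integral_sq_mul_exp_neg {b : ℝ} (hb : 0 < b) :
    ∫ x : ℝ, x ^ 2 * Real.exp (-b * x ^ 2) = Real.sqrt (π / b) / (2 * b) := by
  set f : ℝ → ℝ := fun x => Real.exp (-b * x ^ 2) - 2 * b * (x ^ 2 * Real.exp (-b * x ^ 2))
    with hfdef
  have hF : ∀ x : ℝ, HasDerivAt (fun z : ℝ => z * Real.exp (-b * z ^ 2)) (f x) x := by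
    intro x
    have h2 : HasDerivAt (fun z : ℝ => -b * z ^ 2) (-b * (2 * x)) x := by
      simpa using (hasDerivAt_pow 2 x).const_mul (-b)
    have : HasDerivAt (fun z : ℝ => z * Real.exp (-b * z ^ 2))
        (1 * Real.exp (-b * x ^ 2) + x * (Real.exp (-b * x ^ 2) * (-b * (2 * x)))) x :=
      (hasDerivAt_id x).mul h2.exp
    convert this using 1
    simp [hfdef]; ring
  have hcont : Continuous f := by
    apply Continuous.sub
    · exact (continuous_const.mul (continuous_pow 2)).rexp
    · exact continuous_const.mul ((continuous_pow 2).mul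
        (continuous_const.mul (continuous_pow 2)).rexp)
  have hInt : Integrable f := by
    have := (integrable_exp_neg_mul_sq hb).sub ((integrable_sq_mul_exp_neg hb).const_mul (2 * b))
    exact this
  have key : ∀ R : ℝ, ∫ x in (-R)..R, f x = 2 * (R * Real.exp (-b * R ^ 2)) := by
    intro R
    rw [intervalIntegral.integral_eq_sub_of_hasDerivAt (fun x _ => hF x)
      (hcont.intervalIntegrable _ _)]
    simp; ring
  have t1 : Tendsto (fun R : ℝ => ∫ x in (-R)..R, f x) atTop (𝓝 (∫ x, f x)) :=
    intervalIntegral_tendsto_integral hInt tendsto_neg_atTop_atBot tendsto_id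
  have t2 : Tendsto (fun R : ℝ => 2 * (R * Real.exp (-b * R ^ 2))) atTop (𝓝 0) := by
    have h0 : Tendsto (fun x : ℝ => -(1/2) * x) atTop atBot :=
      (tendsto_const_mul_atBot_of_neg (by norm_num : (-(1/2) : ℝ) < 0)).mpr tendsto_id
    have hgt : Tendsto (fun x : ℝ => Real.exp (-(1/2) * x)) atTop (𝓝 (0:ℝ)) :=
      Real.tendsto_exp_atBot.comp h0
    have hlo := (rpow_mul_exp_neg_mul_sq_isLittleO_exp_neg hb 1).tendsto_zero_of_tendsto hgt
    have h1 : Tendsto (fun R : ℝ => R * Real.exp (-b * R ^ 2)) atTop (𝓝 0) := by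
      refine hlo.congr' ?_
      filter_upwards [eventually_ge_atTop (0:ℝ)] with x hx
      rw [Real.rpow_one]
    simpa using h1.const_mul 2
  have hzero : ∫ x, f x = 0 := by
    have := t1.congr (fun R => (key R))
    exact tendsto_nhds_unique this t2
  have hsplit : ∫ x, f x = (∫ x, Real.exp (-b * x ^ 2))
      - 2 * b * ∫ x, x ^ 2 * Real.exp (-b * x ^ 2) := by
    rw [hfdef]
    rw [integral_sub (integrable_exp_neg_mul_sq hb)
      ((integrable_sq_mul_exp_neg hb).const_mul (2 * b)), integral_const_mul]
  rw [integral_gaussian] at hsplit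
  rw [hsplit] at hzero
  field_simp at hzero ⊢
  linarith

lemma integrable_gauss_shift {b : ℝ} (hb : 0 < b) (m : ℝ) :
    Integrable fun x : ℝ => Real.exp (-b * (x - m) ^ 2) :=
  (integrable_exp_neg_mul_sq hb).comp_sub_right m

lemma integrable_sq_gauss_shift {b : ℝ} (hb : 0 < b) (m : ℝ) :
    Integrable fun x : ℝ => x ^ 2 * Real.exp (-b * (x - m) ^ 2) := by
  have h : Integrable fun z : ℝ => (z + m) ^ 2 * Real.exp (-b * z ^ 2) := by
    have h1 := integrable_sq_mul_exp_neg hb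
    have h2 := (integrable_mul_exp_neg_mul_sq hb).const_mul (2 * m)
    have h3 := (integrable_exp_neg_mul_sq hb).const_mul (m ^ 2)
    have := (h1.add h2).add h3
    refine this.congr (Filter.Eventually.of_forall fun z => ?_)
    simp only [Pi.add_apply]
    ring
  have := h.comp_sub_right m
  simpa using this

lemma integral_gauss_shift {b : ℝ} (hb : 0 < b) (m : ℝ) :
    ∫ x : ℝ, Real.exp (-b * (x - m) ^ 2) = Real.sqrt (π / b) := by
  rw [show (fun x : ℝ => Real.exp (-b * (x - m) ^ 2))
      = fun x => (fun z : ℝ => Real.exp (-b * z ^ 2)) (x - m) from rfl,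
    integral_sub_right_eq_self (fun z : ℝ => Real.exp (-b * z ^ 2)) m,
    integral_gaussian]

lemma integral_sq_gauss_shift {b : ℝ} (hb : 0 < b) (m : ℝ) :
    ∫ x : ℝ, x ^ 2 * Real.exp (-b * (x - m) ^ 2)
      = (1 / (2 * b) + m ^ 2) * Real.sqrt (π / b) := by
  have step : ∫ x : ℝ, x ^ 2 * Real.exp (-b * (x - m) ^ 2)
      = ∫ z : ℝ, (z + m) ^ 2 * Real.exp (-b * z ^ 2) := by
    rw [← integral_sub_right_eq_self (fun z : ℝ => (z + m) ^ 2 * Real.exp (-b * z ^ 2)) m]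
    congr 1
    funext x
    simp [sub_add_cancel]
  rw [step]
  have expand : (fun z : ℝ => (z + m) ^ 2 * Real.exp (-b * z ^ 2))
      = fun z => z ^ 2 * Real.exp (-b * z ^ 2)
          + ((2 * m) * (z * Real.exp (-b * z ^ 2)) + m ^ 2 * Real.exp (-b * z ^ 2)) := by
    funext z; ring
  have hg23 : Integrable (fun z : ℝ =>
      (2 * m) * (z * Real.exp (-b * z ^ 2)) + m ^ 2 * Real.exp (-b * z ^ 2)) := by
    exact ((integrable_mul_exp_neg_mul_sq hb).const_mul (2 * m)).add
      ((integrable_exp_neg_mul_sq hb).const_mul (m ^ 2))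
  rw [expand, integral_add (integrable_sq_mul_exp_neg hb) hg23]
  rw [integral_add ((integrable_mul_exp_neg_mul_sq hb).const_mul (2 * m))
      ((integrable_exp_neg_mul_sq hb).const_mul (m ^ 2)),
    integral_const_mul, integral_const_mul, integral_sq_mul_exp_neg hb,
    integral_mul_exp_neg_mul_sq_zero hb, integral_gaussian]
  ring

lemma key_exponent {σ τ c : ℝ} (hσ : σ ≠ 0) (hτ : τ ≠ 0) (hc : c ≠ 0)
    (h : τ ^ 2 * c ^ 2 + 1 = c ^ 2) (x y : ℝ) :
    -τ * x ^ 2 / (2 * σ) + -(x / c - y) ^ 2 / (2 * σ * τ)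
      = -(1 / (2 * (σ * τ))) * (x - y / c) ^ 2 + -τ * y ^ 2 / (2 * σ) := by
  field_simp
  ring_nf
  linear_combination (-(x ^ 2 - y ^ 2)) * h

lemma sq_mul_exp_le {a : ℝ} (ha : 0 < a) (y : ℝ) :
    y ^ 2 * Real.exp (-(a * y ^ 2)) ≤ 1 / a := by
  have h1 : a * y ^ 2 ≤ Real.exp (a * y ^ 2) := by
    have := Real.add_one_le_exp (a * y ^ 2)
    linarith
  have hx : (0:ℝ) < Real.exp (a * y ^ 2) := Real.exp_pos _
  rw [Real.exp_neg, le_div_iff₀ ha]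
  calc y ^ 2 * (Real.exp (a * y ^ 2))⁻¹ * a
      = (a * y ^ 2) * (Real.exp (a * y ^ 2))⁻¹ := by ring
    _ ≤ Real.exp (a * y ^ 2) * (Real.exp (a * y ^ 2))⁻¹ :=
        mul_le_mul_of_nonneg_right h1 (inv_nonneg.mpr hx.le)
    _ = 1 := mul_inv_cancel₀ hx.ne'



open MeasureTheory

/-- The explicit solution of the replicator-mutator equation with fitness `f(x) = -x²`. -/
noncomputable def uSol (σ : ℝ) (u₀ : ℝ → ℝ) (t x : ℝ) : ℝ :=
  (Real.sqrt (2 * Real.pi * σ * Real.tanh (2 * σ * t)))⁻¹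
    * Real.exp (-(Real.tanh (2 * σ * t)) * x ^ 2 / (2 * σ))
    * (∫ y : ℝ, Real.exp (-(x / Real.cosh (2 * σ * t) - y) ^ 2
        / (2 * σ * Real.tanh (2 * σ * t))) * u₀ y)
    / (∫ y : ℝ, Real.exp (-(Real.tanh (2 * σ * t)) * y ^ 2 / (2 * σ)) * u₀ y)

theorem second_moment_of_explicit_solution_neg_quadratic
    (σ : ℝ) (hσ : 0 < σ) (u₀ : ℝ → ℝ) (hmeas : Measurable u₀)
    (hnn : ∀ x, 0 ≤ u₀ x) (hmass : ∫ y : ℝ, u₀ y = 1)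
    (t : ℝ) (ht : 0 < t) :
    Integrable (fun x : ℝ => x ^ 2 * uSol σ u₀ t x) ∧
    (∫ x : ℝ, x ^ 2 * uSol σ u₀ t x)
      = σ * Real.tanh (2 * σ * t)
        + ((Real.cosh (2 * σ * t)) ^ 2)⁻¹
          * (∫ y : ℝ, Real.exp (-(Real.tanh (2 * σ * t)) * y ^ 2 / (2 * σ)) * y ^ 2 * u₀ y)
          / (∫ y : ℝ, Real.exp (-(Real.tanh (2 * σ * t)) * y ^ 2 / (2 * σ)) * u₀ y) ∧
    (∫ x : ℝ, (-x ^ 2) * uSol σ u₀ t x)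
      = -(σ * Real.tanh (2 * σ * t)
        + ((Real.cosh (2 * σ * t)) ^ 2)⁻¹
          * (∫ y : ℝ, Real.exp (-(Real.tanh (2 * σ * t)) * y ^ 2 / (2 * σ)) * y ^ 2 * u₀ y)
          / (∫ y : ℝ, Real.exp (-(Real.tanh (2 * σ * t)) * y ^ 2 / (2 * σ)) * u₀ y)) := by
  simp only [uSol]
  set τ := Real.tanh (2 * σ * t) with hτdef
  set c := Real.cosh (2 * σ * t) with hcdef
  have hτ : 0 < τ := by
    rw [hτdef, Real.tanh_eq_sinh_div_cosh]
    exact div_pos (Real.sinh_pos_iff.mpr (by positivity)) (Real.cosh_pos _)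
  have hc : 0 < c := Real.cosh_pos _
  have hident : τ ^ 2 * c ^ 2 + 1 = c ^ 2 := by
    rw [hτdef, hcdef, Real.tanh_eq_sinh_div_cosh]
    have h2 := Real.cosh_sq (2 * σ * t)
    have hc0 : Real.cosh (2 * σ * t) ≠ 0 := (Real.cosh_pos _).ne'
    field_simp
    linarith [h2]
  set b := 1 / (2 * (σ * τ)) with hbdef
  have hb : 0 < b := by rw [hbdef]; positivity
  have hu₀ : Integrable u₀ := by
    by_contra hcon
    rw [integral_undef hcon] at hmass
    norm_num at hmass
  set g : ℝ → ℝ := fun y => Real.exp (-τ * y ^ 2 / (2 * σ)) * u₀ y with hgdef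
  have hgmeas : Measurable g := by
    apply Measurable.mul ?_ hmeas
    exact (Real.measurable_exp.comp ((((measurable_id.pow_const 2).const_mul (-τ)).div_const
      (2 * σ))))
  have hgnn : ∀ y, 0 ≤ g y := fun y => mul_nonneg (Real.exp_pos _).le (hnn y)
  have hg_int : Integrable g := by
    refine Integrable.mono' hu₀ hgmeas.aestronglyMeasurable ?_
    refine Filter.Eventually.of_forall fun y => ?_
    rw [Real.norm_eq_abs, abs_of_nonneg (hgnn y)]
    calc g y = Real.exp (-τ * y ^ 2 / (2 * σ)) * u₀ y := rfl
      _ ≤ 1 * u₀ y := by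
          refine mul_le_mul_of_nonneg_right ?_ (hnn y)
          rw [Real.exp_le_one_iff]
          have h' : -τ * y ^ 2 / (2 * σ) = -(τ * y ^ 2 / (2 * σ)) := by ring
          have h'' : 0 ≤ τ * y ^ 2 / (2 * σ) := by positivity
          rw [h']
          linarith
      _ = u₀ y := one_mul _
  have hy2g_int : Integrable (fun y => y ^ 2 * g y) := by
    refine Integrable.mono' (hu₀.const_mul (2 * σ / τ))
      (((measurable_id.pow_const 2).mul hgmeas).aestronglyMeasurable) ?_
    refine Filter.Eventually.of_forall fun y => ?_
    rw [Real.norm_eq_abs, abs_of_nonneg (mul_nonneg (sq_nonneg y) (hgnn y))]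
    have ha : 0 < τ / (2 * σ) := by positivity
    have hbnd := sq_mul_exp_le ha y
    calc y ^ 2 * g y = (y ^ 2 * Real.exp (-(τ / (2 * σ) * y ^ 2))) * u₀ y := by
          have hexp : -τ * y ^ 2 / (2 * σ) = -(τ / (2 * σ) * y ^ 2) := by ring
          simp only [hgdef, hexp]; ring
      _ ≤ (1 / (τ / (2 * σ))) * u₀ y := mul_le_mul_of_nonneg_right hbnd (hnn y)
      _ = 2 * σ / τ * u₀ y := by rw [one_div_div]
  set D := ∫ y, g y with hDdef
  have hD0 : D ≠ 0 := by
    intro hzero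
    have hint0 : ∫ y, g y = 0 := by rw [← hDdef]; exact hzero
    have hae := (integral_eq_zero_iff_of_nonneg hgnn hg_int).mp hint0
    have hu0 : u₀ =ᵐ[volume] 0 := by
      filter_upwards [hae] with y hy
      have hy' : Real.exp (-τ * y ^ 2 / (2 * σ)) * u₀ y = 0 := hy
      rcases mul_eq_zero.mp hy' with h | h
      · exact absurd h (Real.exp_ne_zero _)
      · exact h
    rw [integral_congr_ae hu0] at hmass
    simp at hmass
  have hD : 0 < D := lt_of_le_of_ne (by rw [hDdef]; exact integral_nonneg hgnn) (Ne.symm hD0)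
  set s := Real.sqrt (2 * Real.pi * σ * τ) with hsdef
  have hs : 0 < s := Real.sqrt_pos.mpr (by positivity)
  have hsqpb : Real.sqrt (Real.pi / b) = s := by
    rw [hsdef, hbdef]
    congr 1
    field_simp
  set G : ℝ × ℝ → ℝ := fun p => p.1 ^ 2 * (Real.exp (-b * (p.1 - p.2 / c) ^ 2) * g p.2)
    with hGdef
  have hGy : ∀ y : ℝ, (fun x => G (x, y))
      = fun x => (x ^ 2 * Real.exp (-b * (x - y / c) ^ 2)) * g y := by
    intro y; funext x; simp only [hGdef]; ring
  have hkey : ∀ x : ℝ, x ^ 2 * (s⁻¹ * Real.exp (-τ * x ^ 2 / (2 * σ))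
      * (∫ y, Real.exp (-(x / c - y) ^ 2 / (2 * σ * τ)) * u₀ y) / D)
      = (s⁻¹ * D⁻¹) * ∫ y, G (x, y) := by
    intro x
    have h1 : Real.exp (-τ * x ^ 2 / (2 * σ))
        * ∫ y, Real.exp (-(x / c - y) ^ 2 / (2 * σ * τ)) * u₀ y
        = ∫ y, Real.exp (-b * (x - y / c) ^ 2) * g y := by
      rw [← integral_const_mul]
      congr 1
      funext y
      simp only [hgdef]
      have hexp : -τ * x ^ 2 / (2 * σ) + -(x / c - y) ^ 2 / (2 * σ * τ)
          = -b * (x - y / c) ^ 2 + -τ * y ^ 2 / (2 * σ) := by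
        rw [hbdef]
        linarith [key_exponent hσ.ne' hτ.ne' hc.ne' hident x y]
      rw [← mul_assoc, ← Real.exp_add, hexp, Real.exp_add, mul_assoc]
    have h2 : ∫ y, G (x, y) = x ^ 2 * ∫ y, Real.exp (-b * (x - y / c) ^ 2) * g y := by
      rw [← integral_const_mul]
    rw [h2, ← h1]
    ring
  have hGmeas : AEStronglyMeasurable G ((volume : Measure ℝ).prod volume) := by
    apply Measurable.aestronglyMeasurable
    apply Measurable.mul
    · exact measurable_fst.pow_const 2
    · apply Measurable.mul
      · exact Real.measurable_exp.comp
          (((measurable_fst.sub (measurable_snd.div_const c)).pow_const 2).const_mul (-b))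
      · exact hgmeas.comp measurable_snd
  have hGint : Integrable G ((volume : Measure ℝ).prod volume) := by
    rw [integrable_prod_iff' hGmeas]
    constructor
    · refine Filter.Eventually.of_forall fun y => ?_
      rw [hGy y]
      exact (integrable_sq_gauss_shift hb (y / c)).mul_const _
    · have heq : (fun y => ∫ x, ‖G (x, y)‖)
          = fun y => (s / (2 * b)) * g y + (s * (c ^ 2)⁻¹) * (y ^ 2 * g y) := by
        funext y
        have hnormeq : (fun x => ‖G (x, y)‖)
            = fun x => (x ^ 2 * Real.exp (-b * (x - y / c) ^ 2)) * g y := by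
          funext x
          have hge : G (x, y) = (x ^ 2 * Real.exp (-b * (x - y / c) ^ 2)) * g y := by
            simp only [hGdef]; ring
          rw [hge, Real.norm_eq_abs, abs_of_nonneg]
          exact mul_nonneg (mul_nonneg (sq_nonneg x) (Real.exp_pos _).le) (hgnn y)
        rw [hnormeq, integral_mul_const, integral_sq_gauss_shift hb, hsqpb]
        have : (y / c) ^ 2 = (c ^ 2)⁻¹ * y ^ 2 := by
          rw [div_pow]; field_simp
        rw [this]
        ring
      rw [heq]
      exact (hg_int.const_mul _).add (hy2g_int.const_mul _)
  have hswap : ∫ x, ∫ y, G (x, y) = ∫ y, ∫ x, G (x, y) :=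
    integral_integral_swap hGint
  have hinner : ∀ y : ℝ, ∫ x, G (x, y)
      = (s * (σ * τ)) * g y + (s * (c ^ 2)⁻¹) * (y ^ 2 * g y) := by
    intro y
    rw [hGy y, integral_mul_const, integral_sq_gauss_shift hb, hsqpb]
    have h12b : 1 / (2 * b) = σ * τ := by rw [hbdef]; field_simp
    have h2 : (y / c) ^ 2 = (c ^ 2)⁻¹ * y ^ 2 := by rw [div_pow]; field_simp
    rw [h12b, h2]
    ring
  have hval : ∫ y, ∫ x, G (x, y)
      = s * ((σ * τ) * D + (c ^ 2)⁻¹ * ∫ y, y ^ 2 * g y) := by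
    rw [show (fun y => ∫ x, G (x, y))
        = fun y => (s * (σ * τ)) * g y + (s * (c ^ 2)⁻¹) * (y ^ 2 * g y) from funext hinner]
    rw [integral_add (hg_int.const_mul _) (hy2g_int.const_mul _),
      integral_const_mul, integral_const_mul, ← hDdef]
    ring
  have hA : (∫ y, Real.exp (-τ * y ^ 2 / (2 * σ)) * y ^ 2 * u₀ y) = ∫ y, y ^ 2 * g y := by
    congr 1
    funext y
    simp only [hgdef]
    ring
  have hmoment : ∫ x, x ^ 2 * (s⁻¹ * Real.exp (-τ * x ^ 2 / (2 * σ))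
      * (∫ y, Real.exp (-(x / c - y) ^ 2 / (2 * σ * τ)) * u₀ y) / D)
      = σ * τ + (c ^ 2)⁻¹ * (∫ y, Real.exp (-τ * y ^ 2 / (2 * σ)) * y ^ 2 * u₀ y) / D := by
    rw [show (fun x => x ^ 2 * (s⁻¹ * Real.exp (-τ * x ^ 2 / (2 * σ))
        * (∫ y, Real.exp (-(x / c - y) ^ 2 / (2 * σ * τ)) * u₀ y) / D))
        = fun x => (s⁻¹ * D⁻¹) * ∫ y, G (x, y) from funext hkey]
    rw [integral_const_mul, hswap, hval, hA]
    field_simp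
  have hintegrable : Integrable (fun x => x ^ 2 * (s⁻¹ * Real.exp (-τ * x ^ 2 / (2 * σ))
      * (∫ y, Real.exp (-(x / c - y) ^ 2 / (2 * σ * τ)) * u₀ y) / D)) := by
    rw [show (fun x => x ^ 2 * (s⁻¹ * Real.exp (-τ * x ^ 2 / (2 * σ))
        * (∫ y, Real.exp (-(x / c - y) ^ 2 / (2 * σ * τ)) * u₀ y) / D))
        = fun x => (s⁻¹ * D⁻¹) * ∫ y, G (x, y) from funext hkey]
    exact (hGint.integral_prod_left).const_mul _
  refine ⟨hintegrable, hmoment, ?_⟩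
  rw [show (fun x => -x ^ 2 * (s⁻¹ * Real.exp (-τ * x ^ 2 / (2 * σ))
      * (∫ y, Real.exp (-(x / c - y) ^ 2 / (2 * σ * τ)) * u₀ y) / D))
      = fun x => -(x ^ 2 * (s⁻¹ * Real.exp (-τ * x ^ 2 / (2 * σ))
      * (∫ y, Real.exp (-(x / c - y) ^ 2 / (2 * σ * τ)) * u₀ y) / D))
      from funext fun x => by ring]
  rw [integral_neg, hmoment]
end

section
/- For every t > 0, the explicit solution u(t,·) has total mass one: ∫_ℝ u(t,x) dx = 1. -/
open MeasureTheory


open MeasureTheory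

lemma gauss_shift (s : ℝ) (hs : 0 < s) (m : ℝ) :
    ∫ x : ℝ, Real.exp (-(x - m) ^ 2 / (2 * s)) = Real.sqrt (2 * Real.pi * s) := by
  rw [integral_sub_right_eq_self (μ := volume) (fun a => Real.exp (-a ^ 2 / (2 * s))) m]
  have h : ∀ a : ℝ, -a ^ 2 / (2 * s) = -((2*s)⁻¹) * a ^ 2 := by intro a; field_simp
  simp_rw [h]
  rw [integral_gaussian]
  congr 1
  rw [div_inv_eq_mul]
  ring

theorem explicit_solution_has_mass_one_neg_quadratic
    (σ : ℝ) (hσ : 0 < σ) (u₀ : ℝ → ℝ) (hmeas : Measurable u₀)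
    (hnn : ∀ x, 0 ≤ u₀ x) (hmass : ∫ y : ℝ, u₀ y = 1)
    (t : ℝ) (ht : 0 < t) :
    ∫ x : ℝ, uSol σ u₀ t x = 1 := by
  set a := 2 * σ * t with ha
  have hcpos : 0 < Real.cosh a := Real.cosh_pos a
  have hc : Real.cosh a ≠ 0 := hcpos.ne'
  have hsinh : 0 < Real.sinh a := Real.sinh_pos_iff.mpr (by positivity)
  have hτ : 0 < Real.tanh a := by
    rw [Real.tanh_eq_sinh_div_cosh]; positivity
  set τ := Real.tanh a with hτdef
  set c := Real.cosh a with hcdef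
  have hστ : 0 < 2 * σ * τ := by positivity
  -- u₀ is integrable
  have hu₀ : Integrable u₀ (volume : Measure ℝ) := by
    by_contra h
    rw [integral_undef h] at hmass
    norm_num at hmass
  -- generic integrability of exp-weighted u₀
  have hwInt : ∀ g : ℝ → ℝ, Measurable g → (∀ y, g y ≤ 0) →
      Integrable (fun y => Real.exp (g y) * u₀ y) (volume : Measure ℝ) := by
    intro g hg hg0
    refine hu₀.mono ((Real.measurable_exp.comp hg).mul hmeas).aestronglyMeasurable
      (Filter.Eventually.of_forall fun y => ?_)
    rw [Real.norm_eq_abs, Real.norm_eq_abs,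
      abs_of_nonneg (mul_nonneg (Real.exp_pos _).le (hnn y)), abs_of_nonneg (hnn y)]
    calc Real.exp (g y) * u₀ y ≤ 1 * u₀ y := by
          apply mul_le_mul_of_nonneg_right _ (hnn y)
          exact Real.exp_le_one_iff.mpr (hg0 y)
      _ = u₀ y := one_mul _
  -- the denominator
  set D := ∫ y : ℝ, Real.exp (-τ * y ^ 2 / (2 * σ)) * u₀ y with hDdef
  have hDint : Integrable (fun y => Real.exp (-τ * y ^ 2 / (2 * σ)) * u₀ y)
      (volume : Measure ℝ) := by
    apply hwInt
    · fun_prop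
    · intro y
      apply div_nonpos_of_nonpos_of_nonneg _ (by positivity)
      nlinarith [sq_nonneg y]
  have hDpos : 0 < D := by
    rcases lt_or_eq_of_le (integral_nonneg (f := fun y => Real.exp (-τ * y ^ 2 / (2 * σ)) * u₀ y) (fun y =>
        mul_nonneg (Real.exp_pos _).le (hnn y) : ∀ y,
        (0:ℝ) ≤ Real.exp (-τ * y ^ 2 / (2 * σ)) * u₀ y)) with h | h
    · exact h
    · exfalso
      have hz : (fun y => Real.exp (-τ * y ^ 2 / (2 * σ)) * u₀ y) =ᵐ[volume] 0 := by
        rw [← integral_eq_zero_iff_of_nonneg (fun y =>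
          mul_nonneg (Real.exp_pos _).le (hnn y)) hDint]
        exact h.symm
      have hz' : u₀ =ᵐ[volume] 0 := by
        filter_upwards [hz] with y hy
        have hexp : Real.exp (-τ * y ^ 2 / (2 * σ)) ≠ 0 := (Real.exp_pos _).ne'
        simpa [hexp] using hy
      rw [integral_congr_ae hz'] at hmass
      simp at hmass
  -- key exponent identity
  have hkey : ∀ x y : ℝ,
      Real.exp (-τ * x ^ 2 / (2 * σ)) * Real.exp (-(x / c - y) ^ 2 / (2 * σ * τ))
      = Real.exp (-(x - y / c) ^ 2 / (2 * σ * τ)) * Real.exp (-τ * y ^ 2 / (2 * σ)) := by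
    intro x y
    rw [← Real.exp_add, ← Real.exp_add]
    congr 1
    rw [hτdef, hcdef, Real.tanh_eq_sinh_div_cosh]
    have key : Real.cosh a ^ 2 - Real.sinh a ^ 2 = 1 := Real.cosh_sq_sub_sinh_sq a
    field_simp
    linear_combination (x^2 - y^2) * key
  -- the Fubini kernel
  set φ : ℝ → ℝ → ℝ := fun x y =>
    (Real.sqrt (2 * Real.pi * σ * τ))⁻¹ * Real.exp (-(x - y / c) ^ 2 / (2 * σ * τ))
      * (Real.exp (-τ * y ^ 2 / (2 * σ)) * u₀ y) with hφdef
  have hφnn : ∀ x y, 0 ≤ φ x y := fun x y => by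
    have := hnn y; rw [hφdef]; positivity
  have hsqrt_pos : 0 < Real.sqrt (2 * Real.pi * σ * τ) := by
    apply Real.sqrt_pos.mpr
    have := Real.pi_pos
    positivity
  -- inner integral in x for fixed y
  have hinner : ∀ y : ℝ, ∫ x : ℝ, φ x y = Real.exp (-τ * y ^ 2 / (2 * σ)) * u₀ y := by
    intro y
    have : ∀ x : ℝ, φ x y =
        ((Real.sqrt (2 * Real.pi * σ * τ))⁻¹ * (Real.exp (-τ * y ^ 2 / (2 * σ)) * u₀ y))
          * Real.exp (-(x - y / c) ^ 2 / (2 * (σ * τ))) := by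
      intro x; rw [hφdef]; ring_nf
    simp_rw [this]
    rw [integral_const_mul, gauss_shift (σ * τ) (by positivity) (y / c)]
    have h2 : 2 * Real.pi * (σ * τ) = 2 * Real.pi * σ * τ := by ring
    rw [h2]
    field_simp
  -- integrability in x for fixed y
  have hxInt : ∀ y : ℝ, Integrable (fun x => φ x y) (volume : Measure ℝ) := by
    intro y
    have : ∀ x : ℝ, φ x y =
        ((Real.sqrt (2 * Real.pi * σ * τ))⁻¹ * (Real.exp (-τ * y ^ 2 / (2 * σ)) * u₀ y))
          * Real.exp (-((2 * (σ * τ))⁻¹) * (x - y / c) ^ 2) := by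
      intro x
      rw [hφdef]
      rw [show -((2 * (σ * τ))⁻¹) * (x - y / c) ^ 2 = -(x - y / c) ^ 2 / (2 * σ * τ) by
        rw [show (2:ℝ) * σ * τ = 2 * (σ * τ) by ring, div_eq_mul_inv]; ring]
      ring
    simp_rw [this]
    apply Integrable.const_mul
    exact (integrable_exp_neg_mul_sq (by positivity)).comp_sub_right (y / c)
  -- joint integrability
  have hφmeas : AEStronglyMeasurable (fun p : ℝ × ℝ => φ p.1 p.2)
      ((volume : Measure ℝ).prod (volume : Measure ℝ)) := by
    apply Measurable.aestronglyMeasurable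
    rw [hφdef]
    fun_prop
  have hFub : Integrable (fun p : ℝ × ℝ => φ p.1 p.2)
      ((volume : Measure ℝ).prod (volume : Measure ℝ)) := by
    rw [integrable_prod_iff' hφmeas]
    constructor
    · exact Filter.Eventually.of_forall hxInt
    · have : ∀ y : ℝ, (∫ x : ℝ, ‖φ x y‖) = Real.exp (-τ * y ^ 2 / (2 * σ)) * u₀ y := by
        intro y
        rw [← hinner y]
        congr 1 with x
        exact Real.norm_of_nonneg (hφnn x y)
      simp_rw [this]
      exact hDint
  -- rewrite uSol pointwise
  have huSol : ∀ x : ℝ, uSol σ u₀ t x = (∫ y : ℝ, φ x y) / D := by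
    intro x
    rw [uSol, ← ha, ← hτdef, ← hcdef, ← hDdef]
    congr 1
    rw [mul_assoc, ← integral_const_mul, ← integral_const_mul]
    congr 1 with y
    simp only [hφdef]
    linear_combination ((Real.sqrt (2 * Real.pi * σ * τ))⁻¹ * u₀ y) * hkey x y
  simp_rw [huSol]
  rw [integral_div]
  rw [integral_integral_swap (f := fun x y => φ x y) hFub]
  simp_rw [hinner]
  rw [← hDdef, div_self hDpos.ne']
end

section
/- Propagation of Gaussian initial data for the fitness f(x) = -x²: if u₀(x) = √(a/(2π)) e^{-a(x-m)²/2} with a > 0 and m ∈ ℝ, then for every t > 0 and x ∈ ℝ the explicit solution satisfies u(t,x) = √(a(t)/(2π)) e^{-a(t)(x - m(t))²/2}, where a(t) = (aσ + tanh(2σt)) / (σ(1 + aσ tanh(2σt))) and m(t) = m a σ / (aσ cosh(2σt) + sinh(2σt)). -/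
open MeasureTheory


open MeasureTheory

lemma gauss_conv (p q α β : ℝ) (hp : 0 < p) (hq : 0 < q) :
    (∫ y : ℝ, Real.exp (-(p * (α - y) ^ 2)) * Real.exp (-(q * (y - β) ^ 2)))
      = Real.sqrt (Real.pi / (p + q))
        * Real.exp (-(p * q / (p + q)) * (α - β) ^ 2) := by
  have hpq : (0:ℝ) < p + q := by linarith
  have key : ∀ y : ℝ, Real.exp (-(p * (α - y) ^ 2)) * Real.exp (-(q * (y - β) ^ 2))
      = Real.exp (-(p * q / (p + q)) * (α - β) ^ 2)
        * Real.exp (-(p + q) * (y - (p * α + q * β) / (p + q)) ^ 2) := by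
    intro y
    rw [← Real.exp_add, ← Real.exp_add]
    congr 1
    field_simp
    ring
  simp_rw [key]
  rw [MeasureTheory.integral_const_mul,
    integral_sub_right_eq_self (fun y => Real.exp (-(p + q) * y ^ 2))
      ((p * α + q * β) / (p + q)),
    integral_gaussian]
  ring

theorem propagation_of_gaussian_data_neg_quadratic
    (σ : ℝ) (hσ : 0 < σ) (a m : ℝ) (ha : 0 < a) (u₀ : ℝ → ℝ)
    (hu₀ : u₀ = fun x => Real.sqrt (a / (2 * Real.pi)) * Real.exp (-a * (x - m) ^ 2 / 2)) :
    ∀ t : ℝ, 0 < t → ∀ x : ℝ,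
      uSol σ u₀ t x
        = Real.sqrt ((a * σ + Real.tanh (2 * σ * t))
              / (σ * (1 + a * σ * Real.tanh (2 * σ * t))) / (2 * Real.pi))
          * Real.exp (-((a * σ + Real.tanh (2 * σ * t))
              / (σ * (1 + a * σ * Real.tanh (2 * σ * t))))
            * (x - m * a * σ / (a * σ * Real.cosh (2 * σ * t) + Real.sinh (2 * σ * t))) ^ 2
            / 2) := by
  intro t ht x
  subst hu₀
  have hπ := Real.pi_pos
  unfold uSol
  have hTpos : (0:ℝ) < 2 * σ * t := by positivity
  set c := Real.cosh (2 * σ * t) with hcdef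
  set s := Real.sinh (2 * σ * t) with hsdef
  set τ := Real.tanh (2 * σ * t) with hτdef
  have hc : 0 < c := Real.cosh_pos _
  have hs : 0 < s := Real.sinh_pos_iff.mpr hTpos
  have hτeq : τ = s / c := Real.tanh_eq_sinh_div_cosh _
  have hτ : 0 < τ := by rw [hτeq]; positivity
  have hcs : c ^ 2 - s ^ 2 = 1 := Real.cosh_sq_sub_sinh_sq _
  have hseq : s = τ * c := by rw [hτeq]; field_simp
  have hrel : c ^ 2 - τ ^ 2 * c ^ 2 = 1 := by
    rw [← hcs, hseq]; ring
  have hd1 : (0:ℝ) < 1 + a * σ * τ := by positivity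
  have hd2 : (0:ℝ) < a * σ + τ := by positivity
  have hg : (0:ℝ) < Real.sqrt (a / (2 * Real.pi)) := by positivity
  -- numerator
  have hnum : (∫ y : ℝ, Real.exp (-(x / c - y) ^ 2 / (2 * σ * τ))
        * (Real.sqrt (a / (2 * Real.pi)) * Real.exp (-a * (y - m) ^ 2 / 2)))
      = Real.sqrt (a / (2 * Real.pi))
        * (Real.sqrt (Real.pi / ((2 * σ * τ)⁻¹ + a / 2))
          * Real.exp (-((2 * σ * τ)⁻¹ * (a / 2) / ((2 * σ * τ)⁻¹ + a / 2))
              * (x / c - m) ^ 2)) := by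
    rw [← gauss_conv (2 * σ * τ)⁻¹ (a / 2) (x / c) m (by positivity) (by positivity),
      ← MeasureTheory.integral_const_mul]
    congr 1
    funext y
    rw [show -(x / c - y) ^ 2 / (2 * σ * τ) = -((2 * σ * τ)⁻¹ * (x / c - y) ^ 2) by ring,
      show -a * (y - m) ^ 2 / 2 = -(a / 2 * (y - m) ^ 2) by ring]
    ring
  -- denominator
  have hden : (∫ y : ℝ, Real.exp (-τ * y ^ 2 / (2 * σ))
        * (Real.sqrt (a / (2 * Real.pi)) * Real.exp (-a * (y - m) ^ 2 / 2)))
      = Real.sqrt (a / (2 * Real.pi))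
        * (Real.sqrt (Real.pi / (τ / (2 * σ) + a / 2))
          * Real.exp (-(τ / (2 * σ) * (a / 2) / (τ / (2 * σ) + a / 2))
              * ((0:ℝ) - m) ^ 2)) := by
    rw [← gauss_conv (τ / (2 * σ)) (a / 2) 0 m (by positivity) (by positivity),
      ← MeasureTheory.integral_const_mul]
    congr 1
    funext y
    rw [show -τ * y ^ 2 / (2 * σ) = -(τ / (2 * σ) * ((0:ℝ) - y) ^ 2) by ring,
      show -a * (y - m) ^ 2 / 2 = -(a / 2 * (y - m) ^ 2) by ring]
    ring
  rw [hnum, hden, hseq]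
  have hS : (Real.sqrt (2 * Real.pi * σ * τ))⁻¹
        * Real.sqrt (Real.pi / ((2 * σ * τ)⁻¹ + a / 2))
        / Real.sqrt (Real.pi / (τ / (2 * σ) + a / 2))
      = Real.sqrt ((a * σ + τ) / (σ * (1 + a * σ * τ)) / (2 * Real.pi)) := by
    rw [← Real.sqrt_inv, ← Real.sqrt_mul (by positivity),
      ← Real.sqrt_div (by positivity)]
    congr 1
    rw [div_div]
    field_simp
    ring
  have hE : -τ * x ^ 2 / (2 * σ)
        + (-((2 * σ * τ)⁻¹ * (a / 2) / ((2 * σ * τ)⁻¹ + a / 2)) * (x / c - m) ^ 2)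
        - (-(τ / (2 * σ) * (a / 2) / (τ / (2 * σ) + a / 2)) * ((0:ℝ) - m) ^ 2)
      = -((a * σ + τ) / (σ * (1 + a * σ * τ)))
          * (x - m * a * σ / (a * σ * c + τ * c)) ^ 2 / 2 := by
    have h1 : (2 * σ * τ)⁻¹ + a / 2 = (1 + a * σ * τ) / (2 * σ * τ) := by
      field_simp
    have h2 : τ / (2 * σ) + a / 2 = (τ + a * σ) / (2 * σ) := by
      field_simp
    rw [h1, h2]
    have key : ∀ u X : ℝ, u ≠ 0 → (1 - τ ^ 2) * u = 1 →
        -τ * (u * X ^ 2) / (2 * σ)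
          + -((2 * σ * τ)⁻¹ * (a / 2) / ((1 + a * σ * τ) / (2 * σ * τ))) * (X - m) ^ 2
          - -(τ / (2 * σ) * (a / 2) / ((τ + a * σ) / (2 * σ))) * ((0:ℝ) - m) ^ 2
        = -((a * σ + τ) / (σ * (1 + a * σ * τ)))
            * ((u * X * (a * σ + τ) - m * a * σ) ^ 2 / (u * (a * σ + τ) ^ 2)) / 2 := by
      intro u X hu hu2
      have hne : (1:ℝ) - τ ^ 2 ≠ 0 := by
        intro h
        rw [h, zero_mul] at hu2
        exact zero_ne_one hu2
      have hueq : u = ((1:ℝ) - τ ^ 2)⁻¹ := by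
        field_simp
        linarith [hu2]
      rw [hueq]
      field_simp
      ring
    have e1 : c ^ 2 * (x / c) ^ 2 = x ^ 2 := by field_simp
    have e2 : (c ^ 2 * (x / c) * (a * σ + τ) - m * a * σ) ^ 2 / (c ^ 2 * (a * σ + τ) ^ 2)
        = (x - m * a * σ / (a * σ * c + τ * c)) ^ 2 := by
      rw [div_eq_iff (by positivity)]
      field_simp
    rw [← e2, ← e1]
    exact key (c ^ 2) (x / c) (by positivity) (by linear_combination hrel)
  calc (Real.sqrt (2 * Real.pi * σ * τ))⁻¹ * Real.exp (-τ * x ^ 2 / (2 * σ))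
        * (Real.sqrt (a / (2 * Real.pi))
          * (Real.sqrt (Real.pi / ((2 * σ * τ)⁻¹ + a / 2))
            * Real.exp (-((2 * σ * τ)⁻¹ * (a / 2) / ((2 * σ * τ)⁻¹ + a / 2))
                * (x / c - m) ^ 2)))
        / (Real.sqrt (a / (2 * Real.pi))
          * (Real.sqrt (Real.pi / (τ / (2 * σ) + a / 2))
            * Real.exp (-(τ / (2 * σ) * (a / 2) / (τ / (2 * σ) + a / 2))
                * ((0:ℝ) - m) ^ 2)))
      = ((Real.sqrt (2 * Real.pi * σ * τ))⁻¹
          * Real.sqrt (Real.pi / ((2 * σ * τ)⁻¹ + a / 2))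
          / Real.sqrt (Real.pi / (τ / (2 * σ) + a / 2)))
        * Real.exp (-τ * x ^ 2 / (2 * σ)
            + (-((2 * σ * τ)⁻¹ * (a / 2) / ((2 * σ * τ)⁻¹ + a / 2)) * (x / c - m) ^ 2)
            - (-(τ / (2 * σ) * (a / 2) / (τ / (2 * σ) + a / 2)) * ((0:ℝ) - m) ^ 2)) := by
        rw [Real.exp_sub, Real.exp_add]
        have h3 : Real.sqrt (Real.pi / (τ / (2 * σ) + a / 2)) ≠ 0 := by positivity
        have h4 := Real.exp_ne_zero
          (-(τ / (2 * σ) * (a / 2) / (τ / (2 * σ) + a / 2)) * ((0:ℝ) - m) ^ 2)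
        field_simp
    _ = _ := by rw [hS, hE]
end

section
/- Quantitative convergence to the fundamental solution: there exists a constant C > 0, independent of time, such that for all t ≥ 1 and all x ∈ ℝ, |u(t,x) - ψ(t,x)| ≤ C / sinh(2σt), where ψ(t,x) := (2πσ tanh(2σt))^{-1/2} e^{-x²/(2σ tanh(2σt))}. -/
open MeasureTheory

lemma aux_abs_mul_exp_le {b : ℝ} (hb : 0 < b) (s : ℝ) :
    |s| * Real.exp (-s ^ 2 / b) ≤ Real.sqrt b := by
  rcases le_or_gt (|s|) (Real.sqrt b) with h | h
  · calc |s| * Real.exp (-s ^ 2 / b) ≤ |s| * 1 := by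
          gcongr
          exact Real.exp_le_one_iff.mpr (div_nonpos_of_nonpos_of_nonneg (by nlinarith [sq_nonneg s]) hb.le)
      _ ≤ Real.sqrt b := by simpa using h
  · have hs0 : 0 < |s| := lt_of_le_of_lt (Real.sqrt_nonneg b) h
    have hs2 : (0:ℝ) < s ^ 2 := by rw [← sq_abs]; positivity
    have hexp : Real.exp (-s ^ 2 / b) ≤ b / s ^ 2 := by
      have h1 : s ^ 2 / b ≤ Real.exp (s ^ 2 / b) := by
        have := Real.add_one_le_exp (s ^ 2 / b)
        nlinarith [div_nonneg (sq_nonneg s) hb.le]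
      have h2 : (0:ℝ) < s ^ 2 / b := by positivity
      rw [show -s ^ 2 / b = -(s ^ 2 / b) by ring, Real.exp_neg,
        inv_le_comm₀ (Real.exp_pos _) (by positivity), inv_div]
      exact h1
    calc |s| * Real.exp (-s ^ 2 / b) ≤ |s| * (b / s ^ 2) := by gcongr
      _ = b / |s| := by rw [← sq_abs]; field_simp
      _ ≤ b / Real.sqrt b := by gcongr
      _ = Real.sqrt b := Real.div_sqrt

lemma aux_exp_lipschitz {b : ℝ} (hb : 0 < b) (p q : ℝ) :
    |Real.exp (-p ^ 2 / b) - Real.exp (-q ^ 2 / b)| ≤ 2 / Real.sqrt b * |p - q| := by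
  have hderiv : ∀ s : ℝ, HasDerivWithinAt (fun s : ℝ => Real.exp (-s ^ 2 / b))
      (Real.exp (-s ^ 2 / b) * (-(2 * s) / b)) Set.univ s := by
    intro s
    have h1 : HasDerivAt (fun s : ℝ => -s ^ 2 / b) (-(2 * s) / b) s := by
      simpa using (((hasDerivAt_pow 2 s).neg).div_const b)
    exact h1.exp.hasDerivWithinAt
  have hbound : ∀ s : ℝ, ‖Real.exp (-s ^ 2 / b) * (-(2 * s) / b)‖ ≤ 2 / Real.sqrt b := by
    intro s
    have h3 : ‖Real.exp (-s ^ 2 / b) * (-(2 * s) / b)‖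
        = 2 * (|s| * Real.exp (-s ^ 2 / b)) / b := by
      rw [Real.norm_eq_abs, abs_mul, abs_div, abs_neg, abs_mul, abs_of_pos hb,
        abs_of_pos (Real.exp_pos _), Nat.abs_ofNat]
      ring
    rw [h3]
    have h4 := aux_abs_mul_exp_le hb s
    have hsb : 0 < Real.sqrt b := Real.sqrt_pos.mpr hb
    have hbb : Real.sqrt b * Real.sqrt b = b := Real.mul_self_sqrt hb.le
    rw [div_le_div_iff₀ hb (by positivity)]
    calc 2 * (|s| * Real.exp (-s ^ 2 / b)) * Real.sqrt b
        ≤ 2 * Real.sqrt b * Real.sqrt b := by nlinarith [Real.exp_pos (-s^2/b), abs_nonneg s]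
      _ = 2 * b := by rw [mul_assoc, hbb]
  have := Convex.norm_image_sub_le_of_norm_hasDerivWithin_le
    (fun x _ => hderiv x) (fun x _ => hbound x) convex_univ (Set.mem_univ q) (Set.mem_univ p)
  simpa [Real.norm_eq_abs] using this

theorem quantitative_convergence_to_fundamental_solution
    (σ : ℝ) (hσ : 0 < σ) (u₀ : ℝ → ℝ) (hmeas : Measurable u₀)
    (hnn : ∀ x, 0 ≤ u₀ x) (hmass : ∫ y : ℝ, u₀ y = 1) :
    ∃ C : ℝ, 0 < C ∧ ∀ t : ℝ, 1 ≤ t → ∀ x : ℝ,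
      |uSol σ u₀ t x
        - (Real.sqrt (2 * Real.pi * σ * Real.tanh (2 * σ * t)))⁻¹
            * Real.exp (-x ^ 2 / (2 * σ * Real.tanh (2 * σ * t)))|
        ≤ C / Real.sinh (2 * σ * t) := by
  have hu₀int : Integrable u₀ := by
    by_contra h
    rw [integral_undef h] at hmass; norm_num at hmass
  have hmk : ∀ w : ℝ → ℝ, Continuous w → (∀ y, |w y| ≤ 1) →
      Integrable (fun y => w y * u₀ y) := by
    intro w hw hwb
    refine hu₀int.mono' ((hw.measurable.mul hmeas).aestronglyMeasurable) ?_
    filter_upwards with y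
    rw [Real.norm_eq_abs, abs_mul]
    calc |w y| * |u₀ y| ≤ 1 * |u₀ y| := by gcongr; exact hwb y
      _ = u₀ y := by rw [one_mul, abs_of_nonneg (hnn y)]
  have hexp1 : ∀ z : ℝ, z ≤ 0 → |Real.exp z| ≤ 1 := fun z hz => by
    rw [abs_of_pos (Real.exp_pos z)]; exact Real.exp_le_one_iff.mpr hz
  have hexp2 : ∀ (num den : ℝ), 0 < den → |Real.exp (-num ^ 2 / den)| ≤ 1 :=
    fun num den hden => hexp1 _
      (div_nonpos_of_nonpos_of_nonneg (neg_nonpos.mpr (sq_nonneg num)) hden.le)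
  set D₁ : ℝ := ∫ y : ℝ, Real.exp (-y ^ 2 / (2 * σ)) * u₀ y with hD₁def
  have hint1 : Integrable (fun y => Real.exp (-y ^ 2 / (2 * σ)) * u₀ y) :=
    hmk _ (by fun_prop) (fun y => hexp2 y _ (by positivity))
  have hD₁pos : 0 < D₁ := by
    rw [hD₁def, integral_pos_iff_support_of_nonneg
        (fun y => mul_nonneg (Real.exp_pos _).le (hnn y)) hint1]
    have h0 : 0 < volume (Function.support u₀) := by
      rw [← integral_pos_iff_support_of_nonneg hnn hu₀int, hmass]; norm_num
    convert h0 using 2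
    ext y
    simp [Function.mem_support, Real.exp_ne_zero]
  set a₀ : ℝ := Real.tanh (2 * σ) with ha₀def
  have hsinh2σ : 0 < Real.sinh (2 * σ) := Real.sinh_pos_iff.mpr (by positivity)
  have ha₀pos : 0 < a₀ := by
    rw [ha₀def, Real.tanh_eq_sinh_div_cosh]
    exact div_pos hsinh2σ (Real.cosh_pos _)
  have hP₀A : (0:ℝ) < 2 * Real.pi * σ * a₀ := by
    have := Real.pi_pos; positivity
  refine ⟨(Real.sqrt (2 * Real.pi * σ * a₀))⁻¹ * D₁⁻¹ * (2 / a₀),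
    mul_pos (mul_pos (inv_pos.mpr (Real.sqrt_pos.mpr hP₀A)) (inv_pos.mpr hD₁pos))
      (div_pos two_pos ha₀pos), ?_⟩
  intro t ht x
  rw [uSol]
  have hθpos : 0 < 2 * σ * t := by positivity
  have hθge : 2 * σ ≤ 2 * σ * t := by nlinarith
  set a : ℝ := Real.tanh (2 * σ * t) with hadef
  set c : ℝ := Real.cosh (2 * σ * t) with hcdef
  set s : ℝ := Real.sinh (2 * σ * t) with hsdef
  have hcpos : 0 < c := Real.cosh_pos _
  have hspos : 0 < s := Real.sinh_pos_iff.mpr hθpos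
  have hsc : s ≤ c := by
    have := Real.cosh_sub_sinh (2 * σ * t)
    nlinarith [Real.exp_pos (-(2 * σ * t))]
  have hac : a * c = s := by
    rw [hadef, Real.tanh_eq_sinh_div_cosh]; field_simp; exact mul_comm _ _
  have hapos : 0 < a := by
    have h : a = s / c := by rw [← hac]; field_simp
    rw [h]; exact div_pos hspos hcpos
  have ha1 : a ≤ 1 := by nlinarith
  have ha₀a : a₀ ≤ a := by
    have hsub : Real.sinh (2 * σ - 2 * σ * t) ≤ 0 :=
      Real.sinh_nonpos_iff.mpr (by linarith)
    rw [Real.sinh_sub] at hsub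
    rw [ha₀def, hadef, Real.tanh_eq_sinh_div_cosh, Real.tanh_eq_sinh_div_cosh,
      div_le_div_iff₀ (Real.cosh_pos _) (Real.cosh_pos _)]
    linarith
  have hsq : a ^ 2 * c ^ 2 = c ^ 2 - 1 := by
    have h1 := Real.cosh_sq (2 * σ * t)
    have h2 : (a * c) ^ 2 = s ^ 2 := by rw [hac]
    rw [← hcdef, ← hsdef] at h1
    nlinarith
  have h2σa : (0:ℝ) < 2 * σ * a := mul_pos (mul_pos two_pos hσ) hapos
  have h2σda : (0:ℝ) < 2 * σ / a := div_pos (mul_pos two_pos hσ) hapos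
  have h2πσa : (0:ℝ) < 2 * Real.pi * σ * a :=
    mul_pos (mul_pos (mul_pos two_pos Real.pi_pos) hσ) hapos
  set P : ℝ := (Real.sqrt (2 * Real.pi * σ * a))⁻¹ with hPdef
  set E : ℝ := Real.exp (-a * x ^ 2 / (2 * σ)) with hEdef
  set G : ℝ := Real.exp (-x ^ 2 / (2 * σ * a)) with hGdef
  set N : ℝ := ∫ y : ℝ, Real.exp (-(x / c - y) ^ 2 / (2 * σ * a)) * u₀ y with hNdef
  set D : ℝ := ∫ y : ℝ, Real.exp (-a * y ^ 2 / (2 * σ)) * u₀ y with hDdef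
  have hNint : Integrable (fun y => Real.exp (-(x / c - y) ^ 2 / (2 * σ * a)) * u₀ y) :=
    hmk _ (by fun_prop) (fun y => hexp2 _ _ h2σa)
  have hDint : Integrable (fun y => Real.exp (-a * y ^ 2 / (2 * σ)) * u₀ y) :=
    hmk _ (by fun_prop) (fun y => by
      have h : -a * y ^ 2 / (2 * σ) = -y ^ 2 / (2 * σ / a) := by field_simp
      rw [h]; exact hexp2 y _ (div_pos (mul_pos two_pos hσ) hapos))
  have hDD₁ : D₁ ≤ D := by
    rw [hDdef, hD₁def]
    apply integral_mono hint1 hDint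
    intro y
    have h : -y ^ 2 / (2 * σ) ≤ -a * y ^ 2 / (2 * σ) := by
      rw [div_le_div_iff₀ (by positivity) (by positivity)]
      nlinarith [mul_nonneg (mul_nonneg (sub_nonneg.mpr ha1) (sq_nonneg y)) hσ.le]
    exact mul_le_mul_of_nonneg_right (Real.exp_le_exp.mpr h) (hnn y)
  have hDpos : 0 < D := lt_of_lt_of_le hD₁pos hDD₁
  -- key pointwise identity
  have hkey : ∀ y : ℝ,
      E * Real.exp (-(x / c - y) ^ 2 / (2 * σ * a))
        = Real.exp (-a * y ^ 2 / (2 * σ)) * Real.exp (-(x - y / c) ^ 2 / (2 * σ * a)) := by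
    intro y
    rw [hEdef, ← Real.exp_add, ← Real.exp_add, Real.exp_eq_exp]
    have ha : a ≠ 0 := hapos.ne'
    have hc : c ≠ 0 := hcpos.ne'
    have hs : σ ≠ 0 := hσ.ne'
    field_simp
    linear_combination (y ^ 2 - x ^ 2) * hsq
  -- the difference as a single integral
  set f : ℝ → ℝ := fun y =>
    (E * Real.exp (-(x / c - y) ^ 2 / (2 * σ * a))
      - G * Real.exp (-a * y ^ 2 / (2 * σ))) * u₀ y with hfdef
  have hfb : ∀ y, |f y| ≤ 2 / (a * c) * u₀ y := by
    intro y
    simp only [hfdef]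
    have h1 : (E * Real.exp (-(x / c - y) ^ 2 / (2 * σ * a))
        - G * Real.exp (-a * y ^ 2 / (2 * σ))) * u₀ y
        = Real.exp (-a * y ^ 2 / (2 * σ))
          * (Real.exp (-(x - y / c) ^ 2 / (2 * σ * a)) - Real.exp (-x ^ 2 / (2 * σ * a)))
          * u₀ y := by
      rw [hkey y, hGdef]; ring
    rw [h1, abs_mul, abs_mul, abs_of_nonneg (hnn y)]
    have h2 : |Real.exp (-(x - y / c) ^ 2 / (2 * σ * a)) - Real.exp (-x ^ 2 / (2 * σ * a))|
        ≤ 2 / Real.sqrt (2 * σ * a) * (|y| / c) := by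
      have := aux_exp_lipschitz (b := 2 * σ * a) h2σa (x - y / c) x
      calc |Real.exp (-(x - y / c) ^ 2 / (2 * σ * a)) - Real.exp (-x ^ 2 / (2 * σ * a))|
          ≤ 2 / Real.sqrt (2 * σ * a) * |x - y / c - x| := this
        _ = 2 / Real.sqrt (2 * σ * a) * (|y| / c) := by
            rw [show x - y / c - x = -(y / c) by ring, abs_neg, abs_div,
              abs_of_pos hcpos]
    have h3 : |Real.exp (-a * y ^ 2 / (2 * σ))| * |y|
        ≤ Real.sqrt (2 * σ / a) := by
      have h : -a * y ^ 2 / (2 * σ) = -y ^ 2 / (2 * σ / a) := by field_simp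
      rw [h, abs_of_pos (Real.exp_pos _), mul_comm]
      exact aux_abs_mul_exp_le h2σda y
    have h4 : Real.sqrt (2 * σ / a) = Real.sqrt (2 * σ * a) / a := by
      rw [show 2 * σ / a = (2 * σ * a) / a ^ 2 by field_simp,
        Real.sqrt_div h2σa.le, Real.sqrt_sq hapos.le]
    have hsqab : 0 < Real.sqrt (2 * σ * a) := Real.sqrt_pos.mpr h2σa
    calc |Real.exp (-a * y ^ 2 / (2 * σ))|
          * |Real.exp (-(x - y / c) ^ 2 / (2 * σ * a)) - Real.exp (-x ^ 2 / (2 * σ * a))|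
          * u₀ y
        ≤ |Real.exp (-a * y ^ 2 / (2 * σ))|
          * (2 / Real.sqrt (2 * σ * a) * (|y| / c)) * u₀ y := by
          exact mul_le_mul_of_nonneg_right
            (mul_le_mul_of_nonneg_left h2 (abs_nonneg _)) (hnn y)
        _ = (|Real.exp (-a * y ^ 2 / (2 * σ))| * |y|)
            * (2 / Real.sqrt (2 * σ * a) / c) * u₀ y := by ring
        _ ≤ Real.sqrt (2 * σ / a) * (2 / Real.sqrt (2 * σ * a) / c) * u₀ y := by
          exact mul_le_mul_of_nonneg_right (mul_le_mul_of_nonneg_right h3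
            (div_nonneg (div_nonneg two_pos.le hsqab.le) hcpos.le)) (hnn y)
        _ = 2 / (a * c) * u₀ y := by
          have h5 : Real.sqrt (2 * σ / a) * (2 / Real.sqrt (2 * σ * a) / c)
              = 2 / (a * c) := by
            have ha' : a ≠ 0 := hapos.ne'
            have hc' : c ≠ 0 := hcpos.ne'
            have hs' : Real.sqrt (2 * σ * a) ≠ 0 := hsqab.ne'
            rw [h4]
            field_simp
          rw [h5]
  have hfmeas : AEStronglyMeasurable f volume := by
    rw [hfdef]
    exact ((Continuous.measurable (by fun_prop)).mul hmeas).aestronglyMeasurable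
  have hfint : Integrable f := by
    refine (hu₀int.const_mul (2 / (a * c))).mono' hfmeas ?_
    filter_upwards with y
    rw [Real.norm_eq_abs]
    exact hfb y
  have hintf : ∫ y : ℝ, f y = E * N - G * D := by
    have h : f = fun y =>
        E * (Real.exp (-(x / c - y) ^ 2 / (2 * σ * a)) * u₀ y)
        - G * (Real.exp (-a * y ^ 2 / (2 * σ)) * u₀ y) := by
      funext y; rw [hfdef]; ring
    rw [h, integral_sub (hNint.const_mul E) (hDint.const_mul G),
      integral_const_mul, integral_const_mul, hNdef, hDdef]
  have habsf : |∫ y : ℝ, f y| ≤ 2 / (a * c) := by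
    calc |∫ y : ℝ, f y| ≤ ∫ y : ℝ, |f y| := by
          simpa [Real.norm_eq_abs] using norm_integral_le_integral_norm f
      _ ≤ ∫ y : ℝ, 2 / (a * c) * u₀ y :=
          integral_mono hfint.abs (hu₀int.const_mul _) hfb
      _ = 2 / (a * c) := by rw [integral_const_mul, hmass, mul_one]
  -- assemble
  have hdiff : P * E * N / D - P * G = P * (∫ y : ℝ, f y) / D := by
    rw [hintf]
    field_simp
  have hPpos : (0:ℝ) < P := inv_pos.mpr (Real.sqrt_pos.mpr h2πσa)
  rw [hdiff, abs_div, abs_mul, abs_of_pos hPpos, abs_of_pos hDpos]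
  have hPle : P ≤ (Real.sqrt (2 * Real.pi * σ * a₀))⁻¹ := by
    rw [hPdef]
    exact inv_anti₀ (Real.sqrt_pos.mpr hP₀A) (Real.sqrt_le_sqrt
      (mul_le_mul_of_nonneg_left ha₀a (mul_pos (mul_pos two_pos Real.pi_pos) hσ).le))
  have h6 : |∫ y : ℝ, f y| ≤ 2 / (a₀ * c) :=
    habsf.trans (by
      apply div_le_div_of_nonneg_left two_pos.le (mul_pos ha₀pos hcpos)
      exact mul_le_mul_of_nonneg_right ha₀a hcpos.le)
  have ha₀' : a₀ ≠ 0 := ha₀pos.ne'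
  have hc' : c ≠ 0 := hcpos.ne'
  have hD₁' : D₁ ≠ 0 := hD₁pos.ne'
  calc P * |∫ y : ℝ, f y| / D
      ≤ (Real.sqrt (2 * Real.pi * σ * a₀))⁻¹ * (2 / (a₀ * c)) / D₁ :=
        div_le_div₀ (mul_nonneg (inv_nonneg.mpr (Real.sqrt_nonneg _))
            (div_nonneg two_pos.le (mul_pos ha₀pos hcpos).le))
          (mul_le_mul hPle h6 (abs_nonneg _) (inv_nonneg.mpr (Real.sqrt_nonneg _)))
          hD₁pos hDD₁
    _ = (Real.sqrt (2 * Real.pi * σ * a₀))⁻¹ * D₁⁻¹ * (2 / a₀) / c := by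
        field_simp
    _ ≤ (Real.sqrt (2 * Real.pi * σ * a₀))⁻¹ * D₁⁻¹ * (2 / a₀) / s :=
        div_le_div_of_nonneg_left
          (mul_nonneg (mul_nonneg (inv_nonneg.mpr (Real.sqrt_nonneg _))
            (inv_nonneg.mpr hD₁pos.le)) (div_nonneg two_pos.le ha₀pos.le)) hspos hsc
end

section
/- Convergence to a universal stationary Gaussian: sup_{x ∈ ℝ} |u(t,x) - φ(x)| → 0 as t → ∞, where φ(x) := (2πσ)^{-1/2} e^{-x²/(2σ)}. -/
open MeasureTheory Filter


open MeasureTheory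

lemma rm_exp_sq_lip (p q : ℝ) : |Real.exp (-p^2) - Real.exp (-q^2)| ≤ |p - q| := by
  have hdiff : Differentiable ℝ (fun z : ℝ => Real.exp (-z^2)) := by fun_prop
  have hL : LipschitzWith 1 (fun z : ℝ => Real.exp (-z^2)) := by
    apply lipschitzWith_of_nnnorm_deriv_le hdiff
    intro x
    have hd : HasDerivAt (fun z : ℝ => Real.exp (-z^2)) (Real.exp (-x^2) * -(2*x)) x := by
      have h1 : HasDerivAt (fun z : ℝ => -z^2) (-(2*x)) x := by
        simpa using (hasDerivAt_pow 2 x).fun_neg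
      exact h1.exp
    rw [hd.deriv, ← NNReal.coe_le_coe, coe_nnnorm, NNReal.coe_one, Real.norm_eq_abs,
      abs_mul, abs_neg, abs_mul, Real.abs_exp]
    have h2 : (2:ℝ) * |x| ≤ Real.exp (x^2) := by
      nlinarith [Real.add_one_le_exp (x^2), sq_abs x, sq_nonneg (|x| - 1)]
    have h3 : Real.exp (-x^2) * Real.exp (x^2) = 1 := by
      rw [← Real.exp_add]; simp
    rw [abs_two]
    nlinarith [Real.exp_pos (-x^2), abs_nonneg x]
  have := hL.dist_le_mul p q
  simpa [Real.dist_eq] using this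

lemma rm_exp_sub_exp (s a : ℝ) (hs : 1/2 ≤ s) (hs1 : s ≤ 1) (ha : 0 ≤ a) :
    Real.exp (-(s*a)) - Real.exp (-a) ≤ 2*(1-s) := by
  have h1 : 1 - Real.exp (-((1-s)*a)) ≤ (1-s)*a := by
    nlinarith [Real.add_one_le_exp (-((1-s)*a))]
  have h3 : s*a*Real.exp (-(s*a)) ≤ 1 := by
    have h4 : s*a + 1 ≤ Real.exp (s*a) := Real.add_one_le_exp _
    have h5 : Real.exp (-(s*a)) * Real.exp (s*a) = 1 := by rw [← Real.exp_add]; simp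
    nlinarith [Real.exp_pos (-(s*a)), Real.exp_pos (s*a)]
  have hmul : Real.exp (-(s*a)) * Real.exp (-((1-s)*a)) = Real.exp (-a) := by
    rw [← Real.exp_add]; ring_nf
  nlinarith [Real.exp_pos (-(s*a)), Real.exp_pos (-a), mul_nonneg (Real.exp_pos (-(s*a))).le (mul_nonneg (by linarith : (0:ℝ) ≤ 1-s) ha)]

lemma rm_abs_mul_exp (σ x : ℝ) (hσ : 0 < σ) : |x| * Real.exp (-x^2/(4*σ)) ≤ Real.sqrt σ := by
  have hsq : Real.sqrt σ ^ 2 = σ := Real.sq_sqrt hσ.le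
  have hpos : 0 < Real.sqrt σ := Real.sqrt_pos.mpr hσ
  have h1 : |x| ≤ Real.sqrt σ * (1 + x^2/(4*σ)) := by
    have h0 : (0:ℝ) < 4*σ := by linarith
    rw [mul_add, mul_one]
    rw [← sub_nonneg]
    have key : √σ + √σ * (x ^ 2 / (4 * σ)) - |x| = (√σ * (|x| - 2*√σ)^2) / (4*σ) := by
      field_simp
      nlinarith [sq_abs x]
    rw [key]
    positivity
  have h2 : 1 + x^2/(4*σ) ≤ Real.exp (x^2/(4*σ)) := by
    have := Real.add_one_le_exp (x^2/(4*σ)); linarith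
  have h3 : Real.exp (-x^2/(4*σ)) * Real.exp (x^2/(4*σ)) = 1 := by
    rw [← Real.exp_add]; ring_nf; simp
  calc |x| * Real.exp (-x^2/(4*σ)) ≤ (Real.sqrt σ * Real.exp (x^2/(4*σ))) * Real.exp (-x^2/(4*σ)) := by
        apply mul_le_mul_of_nonneg_right _ (Real.exp_pos _).le
        calc |x| ≤ Real.sqrt σ * (1 + x^2/(4*σ)) := h1
          _ ≤ Real.sqrt σ * Real.exp (x^2/(4*σ)) := by
              apply mul_le_mul_of_nonneg_left h2 hpos.le
    _ = Real.sqrt σ := by rw [mul_assoc, mul_comm (Real.exp _), h3, mul_one]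

lemma rm_tanh_le_one (x : ℝ) : Real.tanh x ≤ 1 := by
  rw [Real.tanh_eq_sinh_div_cosh, div_le_one (Real.cosh_pos x)]
  exact (Real.sinh_lt_cosh x).le

lemma rm_tendsto_tanh : Tendsto Real.tanh atTop (nhds 1) := by
  have heq : ∀ x : ℝ, Real.tanh x = (1 - Real.exp (-(2*x)))/(1 + Real.exp (-(2*x))) := by
    intro x
    rw [Real.tanh_eq_sinh_div_cosh, Real.sinh_eq, Real.cosh_eq]
    have h1 : Real.exp (-(2*x)) = Real.exp (-x) * Real.exp (-x) := by
      rw [← Real.exp_add]; ring_nf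
    have h2 : Real.exp x * Real.exp (-x) = 1 := by rw [← Real.exp_add]; simp
    have h3 : (0:ℝ) < 1 + Real.exp (-(2*x)) := by positivity
    field_simp
    rw [show x*2 = 2*x by ring, h1]
    linear_combination (2*Real.exp (-x)) * h2
  have hlim : Tendsto (fun x : ℝ => Real.exp (-(2*x))) atTop (nhds 0) := by
    apply Real.tendsto_exp_atBot.comp
    exact tendsto_neg_atTop_atBot.comp (tendsto_id.const_mul_atTop two_pos)
  have : Tendsto (fun x : ℝ => (1 - Real.exp (-(2*x)))/(1 + Real.exp (-(2*x)))) atTop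
      (nhds ((1 - 0)/(1 + 0))) := by
    exact ((tendsto_const_nhds.sub hlim)).div (tendsto_const_nhds.add hlim) (by norm_num)
  simp only [sub_zero, add_zero, div_one] at this
  exact this.congr (fun x => (heq x).symm)

lemma rm_tendsto_cosh : Tendsto Real.cosh atTop atTop := by
  apply tendsto_atTop_mono (fun x => ?_) (Real.tendsto_exp_atTop.atTop_div_const two_pos)
  rw [Real.cosh_eq]
  have := (Real.exp_pos (-x)).le
  linarith

lemma rm_int {u₀ : ℝ → ℝ} (hu : Integrable u₀) (f : ℝ → ℝ) (hf : Measurable f)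
    (C : ℝ) (h0 : ∀ y, |f y| ≤ C) : Integrable (fun y => f y * u₀ y) :=
  hu.bdd_mul (c := C) hf.aestronglyMeasurable (Eventually.of_forall fun y => by rw [Real.norm_eq_abs]; exact h0 y)

lemma rm_dct (σ : ℝ) (hσ : 0 < σ) (u₀ : ℝ → ℝ) (hmeas : Measurable u₀)
    (hnn : ∀ x, 0 ≤ u₀ x) (hu : Integrable u₀) (e : ℝ → ℝ → ℝ)
    (hemeas : ∀ t, Measurable (e t))
    (hbd : ∀ᶠ t in atTop, ∀ y, |e t y| ≤ 1)
    (hlim : ∀ y, Tendsto (fun t => e t y) atTop (nhds (Real.exp (-y^2/(2*σ))))) :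
    Tendsto (fun t => ∫ y : ℝ, |e t y - Real.exp (-y^2/(2*σ))| * u₀ y) atTop (nhds 0) := by
  have h0 : nhds (0:ℝ) = nhds (∫ _ : ℝ, (0:ℝ)) := by simp
  rw [h0]
  apply tendsto_integral_filter_of_dominated_convergence (fun y => 2 * u₀ y)
  · exact Eventually.of_forall fun t =>
      (((hemeas t).sub (by fun_prop)).abs.mul hmeas).aestronglyMeasurable
  · filter_upwards [hbd] with t ht
    refine Eventually.of_forall fun y => ?_
    have h1 : |e t y - Real.exp (-y^2/(2*σ))| ≤ 2 := by
      have h2 : |Real.exp (-y^2/(2*σ))| ≤ 1 := by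
        rw [Real.abs_exp, Real.exp_le_one_iff, neg_div]
        exact neg_nonpos.mpr (by positivity)
      calc |e t y - Real.exp (-y^2/(2*σ))| ≤ |e t y| + |Real.exp (-y^2/(2*σ))| := abs_sub _ _
        _ ≤ 2 := by linarith [ht y]
    rw [Real.norm_eq_abs, abs_mul, abs_abs, abs_of_nonneg (hnn y)]
    exact mul_le_mul_of_nonneg_right h1 (hnn y)
  · exact hu.const_mul 2
  · refine Eventually.of_forall fun y => ?_
    have : Tendsto (fun t => |e t y - Real.exp (-y^2/(2*σ))| * u₀ y) atTop
        (nhds (|Real.exp (-y^2/(2*σ)) - Real.exp (-y^2/(2*σ))| * u₀ y)) :=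
      (((hlim y).sub tendsto_const_nhds).abs).mul_const _
    simpa using this

lemma rm_exp_le_one {w : ℝ} (hw : w ≤ 0) : |Real.exp w| ≤ 1 := by
  rw [Real.abs_exp, Real.exp_le_one_iff]; exact hw

lemma rm_exp_mono (σ s x : ℝ) (hσ : 0 < σ) (hs : 1/2 ≤ s) :
    Real.exp (-s * x^2 / (2*σ)) ≤ Real.exp (-x^2 / (4*σ)) := by
  apply Real.exp_le_exp.mpr
  rw [neg_mul, neg_div, neg_div, neg_le_neg_iff, div_le_div_iff₀ (by positivity) (by positivity)]
  nlinarith [mul_nonneg (mul_nonneg (by linarith : (0:ℝ) ≤ 2*s-1) hσ.le) (sq_nonneg x)]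

lemma rm_term2 (σ s x : ℝ) (hσ : 0 < σ) (hs : 1/2 ≤ s) (hs1 : s ≤ 1) :
    |(Real.sqrt (2*Real.pi*σ*s))⁻¹ * Real.exp (-s * x^2 / (2*σ))
      - (Real.sqrt (2*Real.pi*σ))⁻¹ * Real.exp (-x^2 / (2*σ))|
    ≤ (Real.sqrt (2*Real.pi*σ))⁻¹ * ((Real.sqrt s)⁻¹ - 1 + 2*(1 - s)) := by
  have hπ := Real.pi_pos
  have hspos : 0 < s := by linarith
  have hsplit : Real.sqrt (2*Real.pi*σ*s) = Real.sqrt (2*Real.pi*σ) * Real.sqrt s :=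
    Real.sqrt_mul (by positivity) s
  have hsqs_pos : 0 < Real.sqrt s := Real.sqrt_pos.mpr hspos
  have hsqs_le : Real.sqrt s ≤ 1 := by
    rw [show (1:ℝ) = Real.sqrt 1 from (Real.sqrt_one).symm]
    exact Real.sqrt_le_sqrt hs1
  have hinv_ge : 1 ≤ (Real.sqrt s)⁻¹ := by simpa using inv_anti₀ hsqs_pos hsqs_le
  set a : ℝ := x^2 / (2*σ) with ha
  have hann : 0 ≤ a := by positivity
  have hE2' : Real.exp (-s * x^2 / (2*σ)) = Real.exp (-(s*a)) := by
    rw [ha]; ring_nf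
  have hE3' : Real.exp (-x^2 / (2*σ)) = Real.exp (-a) := by
    rw [ha]; ring_nf
  have hfac : (Real.sqrt (2*Real.pi*σ*s))⁻¹ * Real.exp (-s * x^2 / (2*σ))
      - (Real.sqrt (2*Real.pi*σ))⁻¹ * Real.exp (-x^2 / (2*σ))
      = (Real.sqrt (2*Real.pi*σ))⁻¹ * ((Real.sqrt s)⁻¹ * Real.exp (-(s*a)) - Real.exp (-a)) := by
    rw [hsplit, mul_inv, hE2', hE3']; ring
  rw [hfac, abs_mul, abs_of_nonneg (by positivity : (0:ℝ) ≤ (Real.sqrt (2*Real.pi*σ))⁻¹)]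
  apply mul_le_mul_of_nonneg_left _ (by positivity)
  have hEa1 : Real.exp (-(s*a)) ≤ 1 := by
    rw [Real.exp_le_one_iff]; exact neg_nonpos.mpr (by positivity)
  have hE3le : Real.exp (-a) ≤ Real.exp (-(s*a)) := by
    apply Real.exp_le_exp.mpr; nlinarith
  have hnonneg : 0 ≤ (Real.sqrt s)⁻¹ * Real.exp (-(s*a)) - Real.exp (-a) := by
    nlinarith [Real.exp_pos (-(s*a))]
  rw [abs_of_nonneg hnonneg]
  have h8 : ((Real.sqrt s)⁻¹ - 1) * Real.exp (-(s*a)) ≤ ((Real.sqrt s)⁻¹ - 1) := by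
    nlinarith
  have h9 := rm_exp_sub_exp s a hs hs1 hann
  nlinarith [Real.exp_pos (-(s*a))]

lemma rm_bound (σ : ℝ) (hσ : 0 < σ) (u₀ : ℝ → ℝ) (hmeas : Measurable u₀)
    (hnn : ∀ x, 0 ≤ u₀ x) (hu : Integrable u₀) (hmass : ∫ y : ℝ, u₀ y = 1)
    (Dinf : ℝ) (hDinf : 0 < Dinf)
    (hDinfdef : Dinf = ∫ y : ℝ, Real.exp (-y^2 / (2*σ)) * u₀ y)
    (t : ℝ) (hs : 1/2 ≤ Real.tanh (2*σ*t))
    (hD : Dinf/2 ≤ ∫ y : ℝ, Real.exp (-(Real.tanh (2*σ*t)) * y^2 / (2*σ)) * u₀ y)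
    (x : ℝ) :
    |uSol σ u₀ t x - (Real.sqrt (2*Real.pi*σ))⁻¹ * Real.exp (-x^2 / (2*σ))| ≤
      2/Dinf * ((Real.sqrt (Real.pi*σ))⁻¹ * ((Real.cosh (2*σ*t))⁻¹
        + (∫ y : ℝ, |Real.exp (-y^2 / (2*σ*Real.tanh (2*σ*t))) - Real.exp (-y^2 / (2*σ))| * u₀ y)
        + |(∫ y : ℝ, Real.exp (-(Real.tanh (2*σ*t)) * y^2 / (2*σ)) * u₀ y) - Dinf|))
      + (Real.sqrt (2*Real.pi*σ))⁻¹ * (((Real.sqrt (Real.tanh (2*σ*t)))⁻¹ - 1)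
        + 2*(1 - Real.tanh (2*σ*t))) := by
  have hπ := Real.pi_pos
  set s : ℝ := Real.tanh (2*σ*t) with hsdef
  set c : ℝ := Real.cosh (2*σ*t) with hcdef
  have hs1 : s ≤ 1 := rm_tanh_le_one _
  have hspos : 0 < s := by linarith
  have hc1 : 1 ≤ c := Real.one_le_cosh _
  have hcpos : 0 < c := by linarith
  have h2σs : (0:ℝ) < 2*σ*s := by positivity
  have hsq2σs : Real.sqrt (2*σ*s) ^ 2 = 2*σ*s := Real.sq_sqrt h2σs.le
  have hsqpos : 0 < Real.sqrt (2*σ*s) := Real.sqrt_pos.mpr h2σs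
  set E1 : ℝ → ℝ := fun y => Real.exp (-(x / c - y)^2 / (2*σ*s)) with hE1
  set E2 : ℝ → ℝ := fun y => Real.exp (-y^2 / (2*σ*s)) with hE2
  set G : ℝ → ℝ := fun y => Real.exp (-y^2 / (2*σ)) with hG
  set N : ℝ := ∫ y : ℝ, E1 y * u₀ y with hN
  set D : ℝ := ∫ y : ℝ, Real.exp (-s * y^2 / (2*σ)) * u₀ y with hDdef
  set B : ℝ := ∫ y : ℝ, |E2 y - G y| * u₀ y with hB
  set pre : ℝ := (Real.sqrt (2*Real.pi*σ*s))⁻¹ * Real.exp (-s * x^2 / (2*σ)) with hpre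
  have hDpos : 0 < D := lt_of_lt_of_le (by linarith) hD
  have huSol : uSol σ u₀ t x = pre * N / D := rfl
  set φx : ℝ := (Real.sqrt (2*Real.pi*σ))⁻¹ * Real.exp (-x^2 / (2*σ)) with hφx
  have hprepos : 0 < pre := by positivity
  -- integrability
  have hE1int : Integrable (fun y => E1 y * u₀ y) := by
    refine rm_int hu _ (by fun_prop) 1 fun y => rm_exp_le_one ?_
    rw [neg_div]; exact neg_nonpos.mpr (by positivity)
  have hE2int : Integrable (fun y => E2 y * u₀ y) := by
    refine rm_int hu _ (by fun_prop) 1 fun y => rm_exp_le_one ?_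
    rw [neg_div]; exact neg_nonpos.mpr (by positivity)
  have hGint : Integrable (fun y => G y * u₀ y) := by
    refine rm_int hu _ (by fun_prop) 1 fun y => rm_exp_le_one ?_
    rw [neg_div]; exact neg_nonpos.mpr (by positivity)
  have hE2Gint : Integrable (fun y => |E2 y - G y| * u₀ y) := by
    refine rm_int hu _ (by fun_prop) 2 fun y => ?_
    rw [abs_abs]
    have h1 : |E2 y| ≤ 1 := rm_exp_le_one (by rw [neg_div]; exact neg_nonpos.mpr (by positivity))
    have h2 : |G y| ≤ 1 := rm_exp_le_one (by rw [neg_div]; exact neg_nonpos.mpr (by positivity))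
    calc |E2 y - G y| ≤ |E2 y| + |G y| := abs_sub _ _
      _ ≤ 2 := by linarith
  have hBnn : 0 ≤ B := by
    rw [hB]
    exact integral_nonneg fun y => mul_nonneg (abs_nonneg _) (hnn y)
  -- step: |N - Dinf| ≤ |x|/(c*√(2σs)) + B
  have hNDinf : |N - Dinf| ≤ |x| / (c * Real.sqrt (2*σ*s)) + B := by
    have hsub : N - Dinf = ∫ y : ℝ, (E1 y - G y) * u₀ y := by
      rw [hN, hDinfdef, ← integral_sub hE1int hGint]
      congr 1; ext y; ring
    have habs : |N - Dinf| ≤ ∫ y : ℝ, |E1 y - G y| * u₀ y := by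
      rw [hsub]
      have h1 := norm_integral_le_integral_norm (μ := volume) (fun y : ℝ => (E1 y - G y) * u₀ y)
      have h2 : ∀ y : ℝ, ‖(E1 y - G y) * u₀ y‖ = |E1 y - G y| * u₀ y := fun y => by
        rw [Real.norm_eq_abs, abs_mul, abs_of_nonneg (hnn y)]
      rw [Real.norm_eq_abs] at h1
      simp only [h2] at h1
      exact h1
    refine habs.trans ?_
    have hpt : ∀ y : ℝ, |E1 y - G y| ≤ |x| / (c * Real.sqrt (2*σ*s)) + |E2 y - G y| := by
      intro y
      have h12 : |E1 y - E2 y| ≤ |x| / (c * Real.sqrt (2*σ*s)) := by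
        have hp : E1 y = Real.exp (-((x / c - y) / Real.sqrt (2*σ*s))^2) := by
          show Real.exp (-(x / c - y)^2 / (2*σ*s)) = _
          congr 1; rw [div_pow, hsq2σs]; ring
        have hq : E2 y = Real.exp (-((-y) / Real.sqrt (2*σ*s))^2) := by
          show Real.exp (-y^2 / (2*σ*s)) = _
          congr 1; rw [div_pow, neg_sq, hsq2σs]; ring
        rw [hp, hq]
        refine (rm_exp_sq_lip _ _).trans ?_
        have : (x / c - y) / Real.sqrt (2*σ*s) - (-y) / Real.sqrt (2*σ*s)
            = x / (c * Real.sqrt (2*σ*s)) := by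
          field_simp
          ring
        rw [this, abs_div, abs_of_pos (by positivity : (0:ℝ) < c * Real.sqrt (2*σ*s))]
      calc |E1 y - G y| ≤ |E1 y - E2 y| + |E2 y - G y| := abs_sub_le _ _ _
        _ ≤ |x| / (c * Real.sqrt (2*σ*s)) + |E2 y - G y| := by linarith
    have hint2 : Integrable (fun y : ℝ =>
        |x| / (c * Real.sqrt (2*σ*s)) * u₀ y + |E2 y - G y| * u₀ y) :=
      (hu.const_mul _).add hE2Gint
    have hint1 : Integrable (fun y : ℝ => |E1 y - G y| * u₀ y) := by
      refine rm_int hu _ (by fun_prop) 2 fun y => ?_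
      rw [abs_abs]
      have h1 : |E1 y| ≤ 1 := rm_exp_le_one (by rw [neg_div]; exact neg_nonpos.mpr (by positivity))
      have h2 : |G y| ≤ 1 := rm_exp_le_one (by rw [neg_div]; exact neg_nonpos.mpr (by positivity))
      calc |E1 y - G y| ≤ |E1 y| + |G y| := abs_sub _ _
        _ ≤ 2 := by linarith
    calc (∫ y : ℝ, |E1 y - G y| * u₀ y)
        ≤ ∫ y : ℝ, (|x| / (c * Real.sqrt (2*σ*s)) * u₀ y + |E2 y - G y| * u₀ y) := by
          refine integral_mono hint1 hint2 fun y => ?_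
          have := mul_le_mul_of_nonneg_right (hpt y) (hnn y)
          calc |E1 y - G y| * u₀ y
              ≤ (|x| / (c * Real.sqrt (2*σ*s)) + |E2 y - G y|) * u₀ y := this
            _ = |x| / (c * Real.sqrt (2*σ*s)) * u₀ y + |E2 y - G y| * u₀ y := by ring
      _ = |x| / (c * Real.sqrt (2*σ*s)) + B := by
          rw [integral_add (hu.const_mul _) hE2Gint, integral_const_mul, hmass, mul_one, hB]
  -- decomposition
  have heq : pre * N / D - φx = pre * (N - D) / D + (pre - φx) := by
    field_simp
    ring
  have habs2 : |uSol σ u₀ t x - φx| ≤ pre * |N - D| / D + |pre - φx| := by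
    rw [huSol, heq]
    refine (abs_add_le _ _).trans ?_
    have : |pre * (N - D) / D| = pre * |N - D| / D := by
      rw [abs_div, abs_mul, abs_of_pos hprepos, abs_of_pos hDpos]
    rw [this]
  -- term 1 bound
  set K : ℝ := (Real.sqrt (Real.pi*σ))⁻¹ with hK
  have hKpos : 0 < K := by positivity
  have hpreK : pre ≤ K := by
    rw [hpre, hK]
    have h1 : Real.sqrt (Real.pi*σ) ≤ Real.sqrt (2*Real.pi*σ*s) := by
      apply Real.sqrt_le_sqrt
      calc Real.pi*σ = 2*Real.pi*σ*(1/2) := by ring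
        _ ≤ 2*Real.pi*σ*s := mul_le_mul_of_nonneg_left hs (by positivity)
    have h2 : (Real.sqrt (2*Real.pi*σ*s))⁻¹ ≤ (Real.sqrt (Real.pi*σ))⁻¹ := by
      apply inv_anti₀ (by positivity) h1
    have h3 : Real.exp (-s * x^2 / (2*σ)) ≤ 1 := by
      rw [Real.exp_le_one_iff, neg_mul, neg_div]
      exact neg_nonpos.mpr (by positivity)
    calc (Real.sqrt (2*Real.pi*σ*s))⁻¹ * Real.exp (-s * x^2 / (2*σ))
        ≤ (Real.sqrt (Real.pi*σ))⁻¹ * 1 := by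
          apply mul_le_mul h2 h3 (Real.exp_pos _).le (by positivity)
      _ = (Real.sqrt (Real.pi*σ))⁻¹ := mul_one _
  have hpreX : pre * (|x| / (c * Real.sqrt (2*σ*s))) ≤ K * c⁻¹ := by
    have hexp2 : Real.exp (-s * x^2 / (2*σ)) ≤ Real.exp (-x^2 / (4*σ)) :=
      rm_exp_mono σ s x hσ hs
    have hnum : Real.exp (-s * x^2 / (2*σ)) * |x| ≤ Real.sqrt σ := by
      calc Real.exp (-s * x^2 / (2*σ)) * |x| ≤ Real.exp (-x^2 / (4*σ)) * |x| :=
            mul_le_mul_of_nonneg_right hexp2 (abs_nonneg x)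
        _ = |x| * Real.exp (-x^2 / (4*σ)) := mul_comm _ _
        _ ≤ Real.sqrt σ := rm_abs_mul_exp σ x hσ
    have hden : c * Real.sqrt σ ≤ c * Real.sqrt (2*σ*s) := by
      apply mul_le_mul_of_nonneg_left _ hcpos.le
      apply Real.sqrt_le_sqrt
      calc σ = 2*σ*(1/2) := by ring
        _ ≤ 2*σ*s := mul_le_mul_of_nonneg_left hs (by positivity)
    have h4 : pre * (|x| / (c * Real.sqrt (2*σ*s)))
        = (Real.sqrt (2*Real.pi*σ*s))⁻¹ * (Real.exp (-s * x^2 / (2*σ)) * |x|)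
          / (c * Real.sqrt (2*σ*s)) := by rw [hpre]; ring
    rw [h4]
    have h5 : (Real.sqrt (2*Real.pi*σ*s))⁻¹ * (Real.exp (-s * x^2 / (2*σ)) * |x|)
        ≤ K * Real.sqrt σ := by
      apply mul_le_mul _ hnum (by positivity) hKpos.le
      rw [hK]
      apply inv_anti₀ (by positivity)
      apply Real.sqrt_le_sqrt
      calc Real.pi*σ = 2*Real.pi*σ*(1/2) := by ring
        _ ≤ 2*Real.pi*σ*s := mul_le_mul_of_nonneg_left hs (by positivity)
    calc (Real.sqrt (2*Real.pi*σ*s))⁻¹ * (Real.exp (-s * x^2 / (2*σ)) * |x|)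
          / (c * Real.sqrt (2*σ*s))
        ≤ K * Real.sqrt σ / (c * Real.sqrt σ) := by
          apply div_le_div₀ (by positivity) h5 (by positivity) hden
      _ = K * c⁻¹ := by
          rw [mul_comm c (Real.sqrt σ), ← div_div, mul_div_assoc, div_self (by positivity), mul_one,
            div_eq_mul_inv]
  have hterm1 : pre * |N - D| / D ≤ 2/Dinf * (K * (c⁻¹ + B + |D - Dinf|)) := by
    have hND : |N - D| ≤ |x| / (c * Real.sqrt (2*σ*s)) + B + |D - Dinf| := by
      calc |N - D| ≤ |N - Dinf| + |Dinf - D| := abs_sub_le _ _ _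
        _ = |N - Dinf| + |D - Dinf| := by rw [abs_sub_comm Dinf D]
        _ ≤ |x| / (c * Real.sqrt (2*σ*s)) + B + |D - Dinf| := by linarith
    have hnum2 : pre * |N - D| ≤ K * c⁻¹ + K * B + K * |D - Dinf| := by
      calc pre * |N - D| ≤ pre * (|x| / (c * Real.sqrt (2*σ*s)) + B + |D - Dinf|) :=
            mul_le_mul_of_nonneg_left hND hprepos.le
        _ = pre * (|x| / (c * Real.sqrt (2*σ*s))) + pre * B + pre * |D - Dinf| := by ring
        _ ≤ K * c⁻¹ + K * B + K * |D - Dinf| := by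
            have h6 : pre * B ≤ K * B := mul_le_mul_of_nonneg_right hpreK hBnn
            have h7 : pre * |D - Dinf| ≤ K * |D - Dinf| :=
              mul_le_mul_of_nonneg_right hpreK (abs_nonneg _)
            linarith [hpreX]
    calc pre * |N - D| / D ≤ (K * c⁻¹ + K * B + K * |D - Dinf|) / D :=
          (div_le_div_iff_of_pos_right hDpos).mpr hnum2
      _ ≤ (K * c⁻¹ + K * B + K * |D - Dinf|) / (Dinf/2) := by
          exact div_le_div_of_nonneg_left (by positivity) (by linarith) hD
      _ = 2/Dinf * (K * (c⁻¹ + B + |D - Dinf|)) := by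
          field_simp
  -- term 2 bound
  have hterm2 : |pre - φx| ≤ (Real.sqrt (2*Real.pi*σ))⁻¹ * ((Real.sqrt s)⁻¹ - 1 + 2*(1 - s)) := by
    rw [hpre, hφx]
    exact rm_term2 σ s x hσ hs hs1
  calc |uSol σ u₀ t x - φx| ≤ pre * |N - D| / D + |pre - φx| := habs2
    _ ≤ 2/Dinf * (K * (c⁻¹ + B + |D - Dinf|))
        + (Real.sqrt (2*Real.pi*σ))⁻¹ * ((Real.sqrt s)⁻¹ - 1 + 2*(1 - s)) := by
        linarith

theorem convergence_to_universal_stationary_gaussian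
    (σ : ℝ) (hσ : 0 < σ) (u₀ : ℝ → ℝ) (hmeas : Measurable u₀)
    (hnn : ∀ x, 0 ≤ u₀ x) (hmass : ∫ y : ℝ, u₀ y = 1) :
    Tendsto (fun t => ⨆ x : ℝ,
        |uSol σ u₀ t x - (Real.sqrt (2 * Real.pi * σ))⁻¹ * Real.exp (-x ^ 2 / (2 * σ))|)
      atTop (nhds 0) := by
  have hπ := Real.pi_pos
  have h2σ : (0:ℝ) < 2*σ := by linarith
  have hu : Integrable u₀ := integrable_of_integral_eq_one hmass
  have harg : Tendsto (fun t : ℝ => 2*σ*t) atTop atTop := tendsto_id.const_mul_atTop h2σ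
  have htanh : Tendsto (fun t : ℝ => Real.tanh (2*σ*t)) atTop (nhds 1) :=
    rm_tendsto_tanh.comp harg
  have hcosh : Tendsto (fun t : ℝ => Real.cosh (2*σ*t)) atTop atTop :=
    rm_tendsto_cosh.comp harg
  have hsev : ∀ᶠ t : ℝ in atTop, 1/2 ≤ Real.tanh (2*σ*t) :=
    htanh.eventually (eventually_ge_nhds (by norm_num))
  have hGint : Integrable (fun y : ℝ => Real.exp (-y^2 / (2*σ)) * u₀ y) := by
    refine rm_int hu _ (by fun_prop) 1 fun y => rm_exp_le_one ?_
    rw [neg_div]; exact neg_nonpos.mpr (by positivity)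
  set Dinf : ℝ := ∫ y : ℝ, Real.exp (-y^2 / (2*σ)) * u₀ y with hDinfdef
  have hDinfpos : 0 < Dinf := by
    rw [hDinfdef]
    refine (integral_pos_iff_support_of_nonneg
      (fun y => mul_nonneg (Real.exp_pos _).le (hnn y)) hGint).mpr ?_
    have hsupp : (Function.support fun y : ℝ => Real.exp (-y^2 / (2*σ)) * u₀ y)
        = Function.support u₀ := by
      ext y
      simp [Function.mem_support, mul_ne_zero_iff, Real.exp_ne_zero]
    rw [hsupp]
    have h1 : 0 < ∫ y : ℝ, u₀ y := by rw [hmass]; norm_num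
    exact (integral_pos_iff_support_of_nonneg hnn hu).mp h1
  -- DCT for the D-term
  have hDtend : Tendsto (fun t => ∫ y : ℝ,
      |Real.exp (-(Real.tanh (2*σ*t)) * y^2 / (2*σ)) - Real.exp (-y^2 / (2*σ))| * u₀ y)
      atTop (nhds 0) := by
    refine rm_dct σ hσ u₀ hmeas hnn hu _ (fun t => by fun_prop) ?_ ?_
    · filter_upwards [hsev] with t ht y
      refine rm_exp_le_one ?_
      rw [neg_mul, neg_div]
      refine neg_nonpos.mpr (div_nonneg (mul_nonneg (by linarith) (sq_nonneg y)) (by positivity))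
    · intro y
      have h1 : Tendsto (fun t => -(Real.tanh (2*σ*t)) * y^2 / (2*σ)) atTop
          (nhds (-1 * y^2 / (2*σ))) := (htanh.neg.mul_const _).div_const _
      have h2 := (Real.continuous_exp.tendsto _).comp h1
      have h3 : -1 * y^2 / (2*σ) = -y^2 / (2*σ) := by ring
      rw [h3] at h2
      exact h2
  -- DCT for the B-term
  have hBtend : Tendsto (fun t => ∫ y : ℝ,
      |Real.exp (-y^2 / (2*σ*Real.tanh (2*σ*t))) - Real.exp (-y^2 / (2*σ))| * u₀ y)
      atTop (nhds 0) := by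
    refine rm_dct σ hσ u₀ hmeas hnn hu _ (fun t => by fun_prop) ?_ ?_
    · filter_upwards [hsev] with t ht y
      refine rm_exp_le_one ?_
      rw [neg_div]
      refine neg_nonpos.mpr (div_nonneg (sq_nonneg y) (by nlinarith))
    · intro y
      have h0 : Tendsto (fun t => 2*σ*Real.tanh (2*σ*t)) atTop (nhds (2*σ*1)) :=
        htanh.const_mul (2*σ)
      have h1 : Tendsto (fun t => -y^2 / (2*σ*Real.tanh (2*σ*t))) atTop
          (nhds (-y^2 / (2*σ*1))) := tendsto_const_nhds.div h0 (by positivity)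
      have h2 := (Real.continuous_exp.tendsto _).comp h1
      have h3 : -y^2 / (2*σ*1) = -y^2 / (2*σ) := by ring
      rw [h3] at h2
      exact h2
  -- |D t - Dinf| → 0
  have hDabs : Tendsto (fun t => |(∫ y : ℝ,
      Real.exp (-(Real.tanh (2*σ*t)) * y^2 / (2*σ)) * u₀ y) - Dinf|) atTop (nhds 0) := by
    refine squeeze_zero' (Eventually.of_forall fun t => abs_nonneg _) ?_ hDtend
    filter_upwards [hsev] with t ht
    have hint : Integrable (fun y : ℝ => Real.exp (-(Real.tanh (2*σ*t)) * y^2 / (2*σ)) * u₀ y) := by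
      refine rm_int hu _ (by fun_prop) 1 fun y => rm_exp_le_one ?_
      rw [neg_mul, neg_div]
      refine neg_nonpos.mpr (div_nonneg (mul_nonneg (by linarith) (sq_nonneg y)) (by positivity))
    have hsub : (∫ y : ℝ, Real.exp (-(Real.tanh (2*σ*t)) * y^2 / (2*σ)) * u₀ y) - Dinf
        = ∫ y : ℝ, (Real.exp (-(Real.tanh (2*σ*t)) * y^2 / (2*σ)) - Real.exp (-y^2 / (2*σ)))
            * u₀ y := by
      rw [hDinfdef, ← integral_sub hint hGint]
      congr 1; ext y; ring
    rw [hsub]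
    have h1 := norm_integral_le_integral_norm (μ := volume)
      (fun y : ℝ => (Real.exp (-(Real.tanh (2*σ*t)) * y^2 / (2*σ)) - Real.exp (-y^2 / (2*σ)))
        * u₀ y)
    have h2 : ∀ y : ℝ, ‖(Real.exp (-(Real.tanh (2*σ*t)) * y^2 / (2*σ)) - Real.exp (-y^2 / (2*σ)))
        * u₀ y‖ = |Real.exp (-(Real.tanh (2*σ*t)) * y^2 / (2*σ)) - Real.exp (-y^2 / (2*σ))|
          * u₀ y := fun y => by
      rw [Real.norm_eq_abs, abs_mul, abs_of_nonneg (hnn y)]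
    rw [Real.norm_eq_abs] at h1
    simp only [h2] at h1
    exact h1
  have hDev : ∀ᶠ t : ℝ in atTop, Dinf/2 ≤ ∫ y : ℝ,
      Real.exp (-(Real.tanh (2*σ*t)) * y^2 / (2*σ)) * u₀ y := by
    filter_upwards [hDabs.eventually (eventually_lt_nhds (half_pos hDinfpos))] with t ht
    have := abs_lt.mp ht
    linarith [this.1]
  -- limit of the bounding function E
  have hc0 : Tendsto (fun t => (Real.cosh (2*σ*t))⁻¹) atTop (nhds 0) :=
    hcosh.inv_tendsto_atTop
  have hsq1 : Tendsto (fun t => (Real.sqrt (Real.tanh (2*σ*t)))⁻¹ - 1) atTop (nhds 0) := by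
    have h1 : Tendsto (fun t => Real.sqrt (Real.tanh (2*σ*t))) atTop (nhds (Real.sqrt 1)) :=
      (Real.continuous_sqrt.tendsto _).comp htanh
    rw [Real.sqrt_one] at h1
    have h2 := (h1.inv₀ one_ne_zero).sub_const 1
    simpa using h2
  have h1ms : Tendsto (fun t => 2*(1 - Real.tanh (2*σ*t))) atTop (nhds 0) := by
    have h5 : Tendsto (fun t => (1:ℝ) - Real.tanh (2*σ*t)) atTop (nhds (1 - 1)) :=
      (tendsto_const_nhds (x := (1:ℝ))).sub htanh
    have h6 := h5.const_mul (2:ℝ)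
    simpa using h6
  have hE : Tendsto (fun t =>
      2/Dinf * ((Real.sqrt (Real.pi*σ))⁻¹ * ((Real.cosh (2*σ*t))⁻¹
        + (∫ y : ℝ, |Real.exp (-y^2 / (2*σ*Real.tanh (2*σ*t))) - Real.exp (-y^2 / (2*σ))| * u₀ y)
        + |(∫ y : ℝ, Real.exp (-(Real.tanh (2*σ*t)) * y^2 / (2*σ)) * u₀ y) - Dinf|))
      + (Real.sqrt (2*Real.pi*σ))⁻¹ * (((Real.sqrt (Real.tanh (2*σ*t)))⁻¹ - 1)
        + 2*(1 - Real.tanh (2*σ*t)))) atTop (nhds 0) := by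
    have h4 := ((((hc0.add hBtend).add hDabs).const_mul
        ((Real.sqrt (Real.pi*σ))⁻¹)).const_mul (2/Dinf)).add
      ((hsq1.add h1ms).const_mul ((Real.sqrt (2*Real.pi*σ))⁻¹))
    simpa using h4
  -- final squeeze
  refine squeeze_zero' ?_ ?_ hE
  · exact Eventually.of_forall fun t => Real.iSup_nonneg fun x => abs_nonneg _
  · filter_upwards [hsev, hDev] with t h1 h2
    exact ciSup_le fun x => rm_bound σ hσ u₀ hmeas hnn hu hmass Dinf hDinfpos hDinfdef t h1 h2 x
end

section
/- Renormalization transform: let σ > 0, T ∈ (0, ∞], and let v : ℝ × ℝ → ℝ be continuous and nonnegative, with v differentiable in t and twice differentiable in x on (0,T) × ℝ, satisfying ∂_t v = σ² ∂_xx v - x² v there. Assume that for each t ∈ [0,T) the function x ↦ (1 + x²) v(t,x) is Lebesgue integrable, that t ↦ ∫_ℝ x² v(t,x) dx is continuous on [0,T), and that D(t) := 1 - ∫₀ᵗ ∫_ℝ x² v(s,x) dx ds > 0 for all t ∈ [0,T). Then u(t,x) := v(t,x)/D(t) satisfies the nonlocal equation ∂_t u(t,x) = σ² ∂_xx u(t,x)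 + (-x² + ∫_ℝ y² u(t,y) dy) u(t,x) for all (t,x) ∈ (0,T) × ℝ. -/
open MeasureTheory Topology

theorem renormalization_transform_neg_quadratic
    (σ : ℝ) (hσ : 0 < σ) (T : EReal) (hT : 0 < T) (v : ℝ → ℝ → ℝ)
    (hv_cont : Continuous fun p : ℝ × ℝ => v p.1 p.2)
    (hv_nonneg : ∀ t x : ℝ, 0 ≤ v t x)
    (hv_t : ∀ t : ℝ, 0 < t → (t : EReal) < T → ∀ x : ℝ,
      DifferentiableAt ℝ (fun s => v s x) t)
    (hv_x : ∀ t : ℝ, 0 < t → (t : EReal) < T → ∀ x : ℝ,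
      DifferentiableAt ℝ (v t) x ∧ DifferentiableAt ℝ (deriv (v t)) x)
    (hv_pde : ∀ t : ℝ, 0 < t → (t : EReal) < T → ∀ x : ℝ,
      deriv (fun s => v s x) t
        = σ ^ 2 * deriv (deriv (v t)) x - x ^ 2 * v t x)
    (hv_int : ∀ t : ℝ, 0 ≤ t → (t : EReal) < T →
      Integrable (fun x : ℝ => (1 + x ^ 2) * v t x))
    (hM_cont : ContinuousOn (fun t : ℝ => ∫ x : ℝ, x ^ 2 * v t x)
      {t : ℝ | 0 ≤ t ∧ (t : EReal) < T})
    (hD_pos : ∀ t : ℝ, 0 ≤ t → (t : EReal) < T →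
      0 < 1 - ∫ s in (0 : ℝ)..t, ∫ x : ℝ, x ^ 2 * v s x) :
    ∀ t : ℝ, 0 < t → (t : EReal) < T → ∀ x : ℝ,
      deriv (fun s => v s x / (1 - ∫ r in (0 : ℝ)..s, ∫ z : ℝ, z ^ 2 * v r z)) t
        = σ ^ 2 * deriv (deriv (fun y =>
            v t y / (1 - ∫ r in (0 : ℝ)..t, ∫ z : ℝ, z ^ 2 * v r z))) x
          + (-x ^ 2 + ∫ y : ℝ,
              y ^ 2 * (v t y / (1 - ∫ r in (0 : ℝ)..t, ∫ z : ℝ, z ^ 2 * v r z)))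
            * (v t x / (1 - ∫ r in (0 : ℝ)..t, ∫ z : ℝ, z ^ 2 * v r z)) := by

  intro t ht htT x
  have ht0 : (0:ℝ) ≤ t := ht.le
  set M : ℝ → ℝ := fun s => ∫ z : ℝ, z ^ 2 * v s z with hMdef
  have hMeq : (fun t : ℝ => ∫ x : ℝ, x ^ 2 * v t x) = M := rfl
  have hUopen : IsOpen {s : ℝ | 0 < s ∧ (s : EReal) < T} := by
    have : {s : ℝ | 0 < s ∧ (s : EReal) < T}
        = Set.Ioi (0:ℝ) ∩ (fun s : ℝ => (s : EReal)) ⁻¹' Set.Iio T := rfl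
    rw [this]
    exact isOpen_Ioi.inter (isOpen_Iio.preimage continuous_coe_real_ereal)
  have hUsub : {s : ℝ | 0 < s ∧ (s : EReal) < T} ⊆ {s : ℝ | 0 ≤ s ∧ (s : EReal) < T} :=
    fun s hs => ⟨hs.1.le, hs.2⟩
  have hMU : ContinuousOn M {s : ℝ | 0 < s ∧ (s : EReal) < T} :=
    (hMeq ▸ hM_cont).mono hUsub
  have htU : t ∈ {s : ℝ | 0 < s ∧ (s : EReal) < T} := ⟨ht, htT⟩
  have hMint : IntervalIntegrable M volume 0 t := by
    apply ContinuousOn.intervalIntegrable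
    apply (hMeq ▸ hM_cont).mono
    rw [Set.uIcc_of_le ht0]
    intro s hs
    exact ⟨hs.1, lt_of_le_of_lt (EReal.coe_le_coe_iff.mpr hs.2) htT⟩
  have hmeas : StronglyMeasurableAtFilter M (𝓝 t) :=
    hMU.stronglyMeasurableAtFilter hUopen t htU
  have hcont : ContinuousAt M t := hMU.continuousAt (hUopen.mem_nhds htU)
  have hFTC : HasDerivAt (fun s => ∫ r in (0:ℝ)..s, M r) (M t) t :=
    intervalIntegral.integral_hasDerivAt_right hMint hmeas hcont
  have hDd : HasDerivAt (fun s => 1 - ∫ r in (0:ℝ)..s, ∫ z : ℝ, z ^ 2 * v r z)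
      (-(M t)) t := by
    exact ((hasDerivAt_const t (1:ℝ)).sub hFTC).congr_deriv (by simp)
  have hDpos : 0 < 1 - ∫ r in (0:ℝ)..t, ∫ z : ℝ, z ^ 2 * v r z := hD_pos t ht0 htT
  have hDne : (1 - ∫ r in (0:ℝ)..t, ∫ z : ℝ, z ^ 2 * v r z) ≠ 0 := hDpos.ne'
  have hvd : HasDerivAt (fun s => v s x) (deriv (fun s => v s x) t) t :=
    (hv_t t ht htT x).hasDerivAt
  have hq : HasDerivAt (fun s => v s x / (1 - ∫ r in (0:ℝ)..s, ∫ z : ℝ, z ^ 2 * v r z)) _ t := hvd.div hDd hDne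
  rw [hq.deriv]
  have h1 : deriv (deriv (fun y =>
      v t y / (1 - ∫ r in (0:ℝ)..t, ∫ z : ℝ, z ^ 2 * v r z))) x
      = deriv (deriv (v t)) x / (1 - ∫ r in (0:ℝ)..t, ∫ z : ℝ, z ^ 2 * v r z) := by
    have hfe : deriv (fun y => v t y / (1 - ∫ r in (0:ℝ)..t, ∫ z : ℝ, z ^ 2 * v r z))
        = fun y => deriv (v t) y / (1 - ∫ r in (0:ℝ)..t, ∫ z : ℝ, z ^ 2 * v r z) :=
      funext fun y => deriv_div_const _
    rw [hfe, deriv_div_const]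
  have h2 : (∫ y : ℝ, y ^ 2 * (v t y / (1 - ∫ r in (0:ℝ)..t, ∫ z : ℝ, z ^ 2 * v r z)))
      = (∫ y : ℝ, y ^ 2 * v t y) / (1 - ∫ r in (0:ℝ)..t, ∫ z : ℝ, z ^ 2 * v r z) := by
    simp_rw [← mul_div_assoc]
    exact integral_div _ _
  rw [h1, h2, hv_pde t ht htT x]
  have hMt : M t = ∫ y : ℝ, y ^ 2 * v t y := rfl
  rw [← hMt]
  simp only [hMdef]
  field_simp
  ring
end

section
/- Quantitative large-time asymptotics for the heat semigroup: there exists an absolute constant C > 0 such that for every Lebesgue-measurable u₀ : ℝ → ℝ with u₀ ≥ 0 and ∫_ℝ (1 + |x|) u₀(x) dx < ∞, and for every t > 0, sup_{x ∈ ℝ} | (4πt)^{-1/2} ∫_ℝ e^{-(x-y)²/(4t)} u₀(y) dy − (∫_ℝ u₀(y) dy) (4πt)^{-1/2} e^{-x²/(4t)} | ≤ (C/t) ∫_ℝ |y| u₀(y) dy. -/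
open MeasureTheory

lemma heat_lip {t : ℝ} (ht : 0 < t) (a b : ℝ) :
    |Real.exp (-a ^ 2 / (4 * t)) - Real.exp (-b ^ 2 / (4 * t))|
      ≤ (Real.sqrt t)⁻¹ * |a - b| := by
  have hst : (0 : ℝ) < Real.sqrt t := Real.sqrt_pos.mpr ht
  have hst2 : Real.sqrt t * Real.sqrt t = t := Real.mul_self_sqrt ht.le
  have hderiv : ∀ s : ℝ, HasDerivAt (fun s : ℝ => Real.exp (-s ^ 2 / (4 * t)))
      (Real.exp (-s ^ 2 / (4 * t)) * (-(2 * s) / (4 * t))) s := by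
    intro s
    have h1 : HasDerivAt (fun s : ℝ => -s ^ 2 / (4 * t)) (-(2 * s) / (4 * t)) s := by
      have := ((hasDerivAt_pow 2 s).neg).div_const (4 * t)
      simpa using this
    exact h1.exp
  have hbound : ∀ s : ℝ, ‖Real.exp (-s ^ 2 / (4 * t)) * (-(2 * s) / (4 * t))‖
      ≤ (Real.sqrt t)⁻¹ := by
    intro s
    have hE : Real.exp (-s ^ 2 / (4 * t)) * Real.exp (s ^ 2 / (4 * t)) = 1 := by
      rw [← Real.exp_add]
      ring_nf
      exact Real.exp_zero
    have h1 : 1 + s ^ 2 / (4 * t) ≤ Real.exp (s ^ 2 / (4 * t)) := by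
      linarith [Real.add_one_le_exp (s ^ 2 / (4 * t))]
    have h2 : 2 * t * (1 + s ^ 2 / (4 * t)) = 2 * t + s ^ 2 / 2 := by
      field_simp; ring
    have key : |s| * Real.sqrt t ≤ 2 * t * Real.exp (s ^ 2 / (4 * t)) := by
      have h3 := mul_le_mul_of_nonneg_left h1 (by positivity : (0:ℝ) ≤ 2 * t)
      rw [h2] at h3
      nlinarith [sq_nonneg (|s| - 2 * Real.sqrt t), sq_abs s]
    have hnorm : ‖Real.exp (-s ^ 2 / (4 * t)) * (-(2 * s) / (4 * t))‖
        = Real.exp (-s ^ 2 / (4 * t)) * (|s| / (2 * t)) := by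
      rw [Real.norm_eq_abs, abs_mul, abs_of_pos (Real.exp_pos _), abs_div,
        abs_of_pos (by positivity : (0:ℝ) < 4 * t), abs_neg, abs_mul]
      rw [abs_of_nonneg (by norm_num : (0:ℝ) ≤ 2)]
      congr 1
      field_simp
      ring
    rw [hnorm, mul_div_assoc', div_le_iff₀ (by positivity : (0:ℝ) < 2 * t),
      inv_mul_eq_div, le_div_iff₀ hst]
    nlinarith [mul_le_mul_of_nonneg_left key
      (le_of_lt (Real.exp_pos (-s ^ 2 / (4 * t))))]
  have := Convex.norm_image_sub_le_of_norm_hasDerivWithin_le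
    (f := fun s : ℝ => Real.exp (-s ^ 2 / (4 * t)))
    (f' := fun s : ℝ => Real.exp (-s ^ 2 / (4 * t)) * (-(2 * s) / (4 * t)))
    (s := Set.univ) (fun x _ => (hderiv x).hasDerivWithinAt)
    (fun x _ => hbound x) convex_univ (Set.mem_univ b) (Set.mem_univ a)
  simpa [Real.norm_eq_abs] using this

theorem quantitative_large_time_asymptotics_heat_semigroup :
    ∃ C : ℝ, 0 < C ∧ ∀ u₀ : ℝ → ℝ, Measurable u₀ → (∀ x, 0 ≤ u₀ x) →
      Integrable (fun x : ℝ => (1 + |x|) * u₀ x) →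
      ∀ t : ℝ, 0 < t → ∀ x : ℝ,
        |(Real.sqrt (4 * Real.pi * t))⁻¹
            * (∫ y : ℝ, Real.exp (-(x - y) ^ 2 / (4 * t)) * u₀ y)
          - (∫ y : ℝ, u₀ y) * (Real.sqrt (4 * Real.pi * t))⁻¹ * Real.exp (-x ^ 2 / (4 * t))|
          ≤ C / t * ∫ y : ℝ, |y| * u₀ y := by
  refine ⟨1, one_pos, ?_⟩
  intro u₀ hmeas hpos hint t ht x
  have hst : (0 : ℝ) < Real.sqrt t := Real.sqrt_pos.mpr ht
  have hst2 : Real.sqrt t * Real.sqrt t = t := Real.mul_self_sqrt ht.le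
  have hpi : (0 : ℝ) < Real.sqrt (4 * Real.pi * t) :=
    Real.sqrt_pos.mpr (by positivity)
  -- integrability
  have hu : Integrable u₀ := by
    refine hint.mono hmeas.aestronglyMeasurable (Filter.Eventually.of_forall fun y => ?_)
    rw [Real.norm_eq_abs, Real.norm_eq_abs, abs_of_nonneg (hpos y),
      abs_of_nonneg (mul_nonneg (by positivity) (hpos y))]
    nlinarith [hpos y, abs_nonneg y]
  have hy : Integrable (fun y : ℝ => |y| * u₀ y) := by
    refine hint.mono ((measurable_abs.mul hmeas)).aestronglyMeasurable
      (Filter.Eventually.of_forall fun y => ?_)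
    rw [Real.norm_eq_abs, Real.norm_eq_abs,
      abs_of_nonneg (mul_nonneg (abs_nonneg y) (hpos y)),
      abs_of_nonneg (mul_nonneg (by positivity) (hpos y))]
    nlinarith [hpos y, abs_nonneg y]
  have hker : Integrable (fun y : ℝ => Real.exp (-(x - y) ^ 2 / (4 * t)) * u₀ y) := by
    refine hu.mono ?_ (Filter.Eventually.of_forall fun y => ?_)
    · exact (((measurable_const.sub measurable_id).pow_const 2).neg.div_const
        (4 * t)).exp.mul hmeas |>.aestronglyMeasurable
    · rw [Real.norm_eq_abs, Real.norm_eq_abs, abs_of_nonneg (hpos y),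
        abs_of_nonneg (mul_nonneg (Real.exp_pos _).le (hpos y))]
      have : Real.exp (-(x - y) ^ 2 / (4 * t)) ≤ 1 := by
        apply Real.exp_le_one_iff.mpr
        exact div_nonpos_of_nonpos_of_nonneg (neg_nonpos.mpr (sq_nonneg _)) (by positivity)
      nlinarith [hpos y]
  -- rewrite difference as single integral
  have key : (∫ y : ℝ, (Real.exp (-(x - y) ^ 2 / (4 * t)) - Real.exp (-x ^ 2 / (4 * t))) * u₀ y)
      = (∫ y : ℝ, Real.exp (-(x - y) ^ 2 / (4 * t)) * u₀ y)
        - Real.exp (-x ^ 2 / (4 * t)) * ∫ y : ℝ, u₀ y := by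
    rw [← integral_const_mul, ← integral_sub hker (hu.const_mul _)]
    congr 1; ext y; ring
  have hrw : (Real.sqrt (4 * Real.pi * t))⁻¹
        * (∫ y : ℝ, Real.exp (-(x - y) ^ 2 / (4 * t)) * u₀ y)
      - (∫ y : ℝ, u₀ y) * (Real.sqrt (4 * Real.pi * t))⁻¹ * Real.exp (-x ^ 2 / (4 * t))
      = (Real.sqrt (4 * Real.pi * t))⁻¹
        * ∫ y : ℝ, (Real.exp (-(x - y) ^ 2 / (4 * t)) - Real.exp (-x ^ 2 / (4 * t))) * u₀ y := by
    rw [key]; ring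
  rw [hrw, abs_mul, abs_of_pos (inv_pos.mpr hpi)]
  have hIbound : |∫ y : ℝ, (Real.exp (-(x - y) ^ 2 / (4 * t))
        - Real.exp (-x ^ 2 / (4 * t))) * u₀ y|
      ≤ (Real.sqrt t)⁻¹ * ∫ y : ℝ, |y| * u₀ y := by
    rw [← integral_const_mul]
    have hpt : ∀ y : ℝ, ‖(Real.exp (-(x - y) ^ 2 / (4 * t))
        - Real.exp (-x ^ 2 / (4 * t))) * u₀ y‖ ≤ (Real.sqrt t)⁻¹ * (|y| * u₀ y) := by
      intro y
      rw [Real.norm_eq_abs, abs_mul, abs_of_nonneg (hpos y)]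
      have h1 := heat_lip ht (x - y) x
      have h2 : |x - y - x| = |y| := by rw [abs_sub_comm]; congr 1; ring
      rw [h2] at h1
      calc |Real.exp (-(x - y) ^ 2 / (4 * t)) - Real.exp (-x ^ 2 / (4 * t))| * u₀ y
          ≤ ((Real.sqrt t)⁻¹ * |y|) * u₀ y :=
            mul_le_mul_of_nonneg_right h1 (hpos y)
        _ = (Real.sqrt t)⁻¹ * (|y| * u₀ y) := by ring
    have := norm_integral_le_of_norm_le (hy.const_mul (Real.sqrt t)⁻¹)
      (Filter.Eventually.of_forall hpt)
    simpa [Real.norm_eq_abs] using this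
  have hI : (0 : ℝ) ≤ ∫ y : ℝ, |y| * u₀ y :=
    integral_nonneg fun y => mul_nonneg (abs_nonneg y) (hpos y)
  calc (Real.sqrt (4 * Real.pi * t))⁻¹
        * |∫ y : ℝ, (Real.exp (-(x - y) ^ 2 / (4 * t)) - Real.exp (-x ^ 2 / (4 * t))) * u₀ y|
      ≤ (Real.sqrt (4 * Real.pi * t))⁻¹ * ((Real.sqrt t)⁻¹ * ∫ y : ℝ, |y| * u₀ y) :=
        mul_le_mul_of_nonneg_left hIbound (le_of_lt (inv_pos.mpr hpi))
    _ ≤ (Real.sqrt t)⁻¹ * ((Real.sqrt t)⁻¹ * ∫ y : ℝ, |y| * u₀ y) := by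
        apply mul_le_mul_of_nonneg_right _ (by positivity)
        apply inv_anti₀ hst
        apply Real.sqrt_le_sqrt
        nlinarith [Real.pi_gt_three]
    _ = 1 / t * ∫ y : ℝ, |y| * u₀ y := by
        rw [← mul_assoc, ← mul_inv, hst2, one_div]
end
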